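/- arXiv:1311.2181 — 4 statements merged into one kernel-verified Lean document; each statement's English description precedes it below -/
import Mathlib

section
/- Suppose Assumption A4 is satisfied. Then diam(𝓛) < 1 if and only if there exist δ > 0 and T > 0 such that for every t0 ≥ 0 the graph G([t0, t0+T], δ) has a spanning tree (i.e., the system has a δ-spanning tree across every T-length time interval). -/
open Filter MeasureTheory intervalIntegral Set



section Pure

variable {m : ℕ}

/-- Hajnal-type contraction inequality for one pair of rows. -/
lemma hajnal_pair (P Q : Matrix (Fin m) (Fin m) ℝ)
    (hP0 : ∀ i j, 0 ≤ P i j) (hP1 : ∀ i, ∑ k, P i k = 1)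
    (η D : ℝ) (hη1 : η ≤ 1) (hD : 0 ≤ D)
    (hQ : ∀ k k', ∑ l, |Q k l - Q k' l| ≤ D)
    (a b : Fin m) (hscr : ∃ k, η ≤ P a k ∧ η ≤ P b k) :
    ∑ l, |(P * Q) a l - (P * Q) b l| ≤ (1 - η) * D := by
  classical
  set μ : Fin m → ℝ := fun k => min (P a k) (P b k) with hμ
  have hμ0 : ∀ k, 0 ≤ μ k := fun k => le_min (hP0 a k) (hP0 b k)
  set α : Fin m → ℝ := fun k => P a k - μ k with hα
  set β : Fin m → ℝ := fun k => P b k - μ k with hβ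
  have hα0 : ∀ k, 0 ≤ α k := fun k => by simp [hα, hμ, min_le_left]
  have hβ0 : ∀ k, 0 ≤ β k := fun k => by simp [hβ, hμ, min_le_right]
  set s : ℝ := ∑ k, α k with hs
  have hsβ : ∑ k, β k = s := by
    simp only [hs, hα, hβ, Finset.sum_sub_distrib, hP1 a, hP1 b]
  have hs0 : 0 ≤ s := Finset.sum_nonneg fun k _ => hα0 k
  have hsum_mu : η ≤ ∑ k, μ k := by
    obtain ⟨k, hk1, hk2⟩ := hscr
    calc η ≤ μ k := le_min hk1 hk2
    _ ≤ ∑ k, μ k := Finset.single_le_sum (fun k _ => hμ0 k) (Finset.mem_univ k)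
  have hsle : s ≤ 1 - η := by
    have : s = 1 - ∑ k, μ k := by
      simp only [hs, hα, Finset.sum_sub_distrib, hP1 a]
    rw [this]; linarith
  have hdiff : ∀ l, (P * Q) a l - (P * Q) b l
      = ∑ k, α k * Q k l - ∑ k, β k * Q k l := by
    intro l
    simp only [Matrix.mul_apply, hα, hβ]
    rw [← Finset.sum_sub_distrib, ← Finset.sum_sub_distrib]
    congr 1; ext k; ring
  rcases eq_or_lt_of_le hs0 with hse | hsp
  · -- s = 0
    have hαz : ∀ k ∈ Finset.univ, α k = 0 :=
      (Finset.sum_eq_zero_iff_of_nonneg (fun k _ => hα0 k)).1 hse.symm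
    have hβz : ∀ k ∈ Finset.univ, β k = 0 :=
      (Finset.sum_eq_zero_iff_of_nonneg (fun k _ => hβ0 k)).1 (hsβ.trans hse.symm)
    have hz : ∀ l, (P * Q) a l - (P * Q) b l = 0 := by
      intro l
      rw [hdiff l, Finset.sum_eq_zero, Finset.sum_eq_zero, sub_zero]
      · intro k hk; rw [hβz k hk, zero_mul]
      · intro k hk; rw [hαz k hk, zero_mul]
    calc ∑ l, |(P * Q) a l - (P * Q) b l| = 0 := by
          simp only [hz, abs_zero, Finset.sum_const_zero]
      _ ≤ (1 - η) * D := mul_nonneg (by linarith) hD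
  · -- s > 0
    have expand : ∀ l, ∑ k, ∑ k', α k * β k' * (Q k l - Q k' l)
        = (∑ k, α k * Q k l) * s - s * (∑ k', β k' * Q k' l) := by
      intro l
      calc ∑ k, ∑ k', α k * β k' * (Q k l - Q k' l)
          = ∑ k, ((α k * Q k l) * ∑ k', β k' - α k * ∑ k', β k' * Q k' l) := by
            apply Finset.sum_congr rfl; intro k _
            rw [Finset.mul_sum, Finset.mul_sum, ← Finset.sum_sub_distrib]
            apply Finset.sum_congr rfl; intro k' _; ring
        _ = (∑ k, α k * Q k l) * (∑ k', β k') - (∑ k, α k) * (∑ k', β k' * Q k' l) := by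
            rw [Finset.sum_sub_distrib, ← Finset.sum_mul, ← Finset.sum_mul]
        _ = (∑ k, α k * Q k l) * s - s * (∑ k', β k' * Q k' l) := by
            rw [hsβ, ← hs]
    have key : ∀ l, (P * Q) a l - (P * Q) b l
        = s⁻¹ * ∑ k, ∑ k', α k * β k' * (Q k l - Q k' l) := by
      intro l
      rw [hdiff l, expand l]
      field_simp
    calc ∑ l, |(P * Q) a l - (P * Q) b l|
        ≤ ∑ l, s⁻¹ * ∑ k, ∑ k', α k * β k' * |Q k l - Q k' l| := by
          apply Finset.sum_le_sum
          intro l _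
          rw [key l, abs_mul, abs_of_nonneg (inv_nonneg.2 hs0)]
          apply mul_le_mul_of_nonneg_left _ (inv_nonneg.2 hs0)
          calc |∑ k, ∑ k', α k * β k' * (Q k l - Q k' l)|
              ≤ ∑ k, |∑ k', α k * β k' * (Q k l - Q k' l)| := Finset.abs_sum_le_sum_abs _ _
            _ ≤ ∑ k, ∑ k', α k * β k' * |Q k l - Q k' l| := by
                apply Finset.sum_le_sum; intro k _
                calc |∑ k', α k * β k' * (Q k l - Q k' l)|
                    ≤ ∑ k', |α k * β k' * (Q k l - Q k' l)| := Finset.abs_sum_le_sum_abs _ _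
                  _ = ∑ k', α k * β k' * |Q k l - Q k' l| := by
                      apply Finset.sum_congr rfl; intro k' _
                      rw [abs_mul, abs_of_nonneg (mul_nonneg (hα0 k) (hβ0 k'))]
      _ = s⁻¹ * ∑ k, ∑ k', α k * β k' * (∑ l, |Q k l - Q k' l|) := by
          rw [← Finset.mul_sum]
          congr 1
          rw [Finset.sum_comm]
          apply Finset.sum_congr rfl; intro k _
          rw [Finset.sum_comm]
          apply Finset.sum_congr rfl; intro k' _
          rw [← Finset.mul_sum]
      _ ≤ s⁻¹ * ∑ k, ∑ k', α k * β k' * D := by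
          apply mul_le_mul_of_nonneg_left _ (inv_nonneg.2 hs0)
          apply Finset.sum_le_sum; intro k _
          apply Finset.sum_le_sum; intro k' _
          exact mul_le_mul_of_nonneg_left (hQ k k') (mul_nonneg (hα0 k) (hβ0 k'))
      _ = s⁻¹ * (s * (s * D)) := by
          congr 1
          calc ∑ k, ∑ k', α k * β k' * D
              = ∑ k, α k * ((∑ k', β k') * D) := by
                apply Finset.sum_congr rfl; intro k _
                rw [Finset.sum_mul, Finset.mul_sum]
                apply Finset.sum_congr rfl; intro k' _; ring
            _ = (∑ k, α k) * ((∑ k', β k') * D) := by rw [← Finset.sum_mul]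
            _ = s * (s * D) := by rw [hsβ, ← hs]
      _ = s * D := by field_simp
      _ ≤ (1 - η) * D := mul_le_mul_of_nonneg_right hsle hD

end Pure


section Graph

lemma rtg_cross {α : Type*} {e : α → α → Prop} {U : Finset α} {r a : α}
    (h : Relation.ReflTransGen e r a) (ha : a ∈ U) (hr : r ∉ U) :
    ∃ k l, k ∉ U ∧ l ∈ U ∧ e k l := by
  classical
  induction h with
  | refl => exact absurd ha hr
  | @tail b c h' e' ih =>
    by_cases hb : b ∈ U
    · exact ih hb
    · exact ⟨b, c, hb, ha, e'⟩

lemma no_root_split {m : ℕ} (hm : 0 < m) {e : Fin m → Fin m → Prop}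
    (h : ∀ r : Fin m, ∃ i, ¬ Relation.ReflTransGen e r i) :
    ∃ A B : Finset (Fin m), A.Nonempty ∧ B.Nonempty ∧ Disjoint A B ∧
      (∀ x ∈ A, ∀ j, e j x → j ∈ A) ∧ (∀ x ∈ B, ∀ j, e j x → j ∈ B) := by
  classical
  set Cl : Finset (Fin m) → Prop := fun S => ∀ x ∈ S, ∀ j, e j x → j ∈ S with hCl
  set C : Fin m → Finset (Fin m) :=
    fun i => Finset.univ.filter (fun j => Relation.ReflTransGen e j i) with hC
  have hCmem : ∀ i, i ∈ C i := fun i => by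
    simp [hC, Relation.ReflTransGen.refl]
  have hCrtg : ∀ i j, j ∈ C i ↔ Relation.ReflTransGen e j i := fun i j => by
    simp [hC]
  have hCcl : ∀ i, Cl (C i) := by
    intro i x hx j hj
    rw [hCrtg] at hx ⊢
    exact Relation.ReflTransGen.head hj hx
  -- minimal closed nonempty subset of a closed nonempty set
  have hmin : ∀ S : Finset (Fin m), S.Nonempty → Cl S →
      ∃ M ⊆ S, M.Nonempty ∧ Cl M ∧ ∀ S', S' ⊆ M → S'.Nonempty → Cl S' → S' = M := by
    intro S hSne hScl
    set T := S.powerset.filter (fun M => M.Nonempty ∧ Cl M) with hT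
    have hSmemT : S ∈ T :=
      Finset.mem_filter.2 ⟨Finset.mem_powerset_self S, hSne, hScl⟩
    obtain ⟨M, hMT, hMmin⟩ := Finset.exists_min_image T Finset.card ⟨S, hSmemT⟩
    simp only [hT, Finset.mem_filter, Finset.mem_powerset] at hMT
    refine ⟨M, hMT.1, hMT.2.1, hMT.2.2, ?_⟩
    intro S' hS'M hS'ne hS'cl
    have hS'T : S' ∈ T := by
      simp only [hT, Finset.mem_filter, Finset.mem_powerset]
      exact ⟨hS'M.trans hMT.1, hS'ne, hS'cl⟩
    exact Finset.eq_of_subset_of_card_le hS'M (hMmin S' hS'T)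
  obtain ⟨M, _, hMne, hMcl, hMmin⟩ :=
    hmin (C ⟨0, hm⟩) ⟨_, hCmem ⟨0, hm⟩⟩ (hCcl ⟨0, hm⟩)
  by_cases hall : ∀ i, (C i ∩ M).Nonempty
  · -- then there is a root, contradiction
    exfalso
    obtain ⟨r, hr⟩ := hMne
    refine (h r).elim (fun i hi => hi ?_)
    obtain ⟨x, hx⟩ := hall i
    rw [Finset.mem_inter] at hx
    have hrx : Relation.ReflTransGen e r x := by
      have h1 : C x ∩ M = M := by
        apply hMmin _ Finset.inter_subset_right ⟨x, by
          rw [Finset.mem_inter]; exact ⟨hCmem x, hx.2⟩⟩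
        intro y hy j hj
        rw [Finset.mem_inter] at hy ⊢
        exact ⟨hCcl x y hy.1 j hj, hMcl y hy.2 j hj⟩
      have : r ∈ C x ∩ M := h1.symm ▸ hr
      exact (hCrtg x r).1 (Finset.mem_inter.1 this).1
    exact hrx.trans ((hCrtg i x).1 hx.1)
  · push_neg at hall
    obtain ⟨i, hi⟩ := hall
    obtain ⟨M2, hM2C, hM2ne, hM2cl, _⟩ := hmin (C i) ⟨_, hCmem i⟩ (hCcl i)
    refine ⟨M, M2, hMne, hM2ne, ?_, hMcl, hM2cl⟩
    rw [Finset.disjoint_left]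
    intro x hxM hxM2
    have : x ∈ C i ∩ M := Finset.mem_inter.2 ⟨hM2C hxM2, hxM⟩
    simp [hi] at this

end Graph


section Scramble

variable {m : ℕ}

/-- `ReachN e n a r k` : from `k` at level `n - r` one can reach `a` at level `n`,
using at each level `s → s+1` either a stay or an `e s`-edge. -/
def ReachN (e : ℕ → Fin m → Fin m → Prop) (n : ℕ) (a : Fin m) : ℕ → Fin m → Prop
  | 0, k => k = a
  | (r+1), k => ReachN e n a r k ∨ ∃ l, ReachN e n a r l ∧ e (n - r - 1) k l

lemma reachN_self (e : ℕ → Fin m → Fin m → Prop) (n : ℕ) (a : Fin m) :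
    ∀ r, ReachN e n a r a := by
  intro r
  induction r with
  | zero => rfl
  | succ r ih => exact Or.inl ih

lemma scramble_core (n : ℕ) (hm : 0 < m) (hn : m ≤ n + 1)
    (e : ℕ → Fin m → Fin m → Prop)
    (hroot : ∀ s, ∃ r, ∀ i, Relation.ReflTransGen (e s) r i) (a b : Fin m) :
    ∃ k, ReachN e n a n k ∧ ReachN e n b n k := by
  classical
  set U : ℕ → Finset (Fin m) :=
    fun r => Finset.univ.filter (fun k => ReachN e n a r k) with hU
  set W : ℕ → Finset (Fin m) :=
    fun r => Finset.univ.filter (fun k => ReachN e n b r k) with hW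
  have hUmem : ∀ r k, k ∈ U r ↔ ReachN e n a r k := fun r k => by simp [hU]
  have hWmem : ∀ r k, k ∈ W r ↔ ReachN e n b r k := fun r k => by simp [hW]
  have hUmono : ∀ r, U r ⊆ U (r+1) := by
    intro r k hk; rw [hUmem] at hk ⊢; exact Or.inl hk
  have hWmono : ∀ r, W r ⊆ W (r+1) := by
    intro r k hk; rw [hWmem] at hk ⊢; exact Or.inl hk
  have haU : ∀ r, a ∈ U r := fun r => (hUmem r a).2 (reachN_self e n a r)
  have hbW : ∀ r, b ∈ W r := fun r => (hWmem r b).2 (reachN_self e n b r)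
  have growth : ∀ r, Disjoint (U r) (W r) →
      (U r).card + (W r).card + 1 ≤ (U (r+1)).card + (W (r+1)).card := by
    intro r hdisj
    obtain ⟨rt, hrt⟩ := hroot (n - r - 1)
    have hgrow : ∀ (X : ℕ → Finset (Fin m)) (c : Fin m),
        (∀ r k, k ∈ X r ↔ ReachN e n c r k) → (∀ r, X r ⊆ X (r+1)) →
        (∀ r, c ∈ X r) → rt ∉ X r → (X r).card + 1 ≤ (X (r+1)).card := by
      intro X c hXmem hXmono hcX hrtX
      obtain ⟨k, l, hkX, hlX, hekl⟩ := rtg_cross (hrt c) (hcX r) hrtX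
      have hkX1 : k ∈ X (r+1) := by
        rw [hXmem]
        exact Or.inr ⟨l, (hXmem r l).1 hlX, hekl⟩
      have : X r ⊂ X (r+1) :=
        Finset.ssubset_iff_of_subset (hXmono r) |>.2 ⟨k, hkX1, hkX⟩
      exact Finset.card_lt_card this
    by_cases hrtU : rt ∈ U r
    · have hrtW : rt ∉ W r := Finset.disjoint_left.1 hdisj hrtU
      have h1 := hgrow W b hWmem hWmono hbW hrtW
      have h2 := Finset.card_le_card (hUmono r)
      omega
    · have h1 := hgrow U a hUmem hUmono haU hrtU
      have h2 := Finset.card_le_card (hWmono r)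
      omega
  have main : ∀ r, Disjoint (U r) (W r) → 2 + r ≤ (U r).card + (W r).card := by
    intro r
    induction r with
    | zero =>
      intro _
      have h1 : 0 < (U 0).card := Finset.card_pos.2 ⟨a, haU 0⟩
      have h2 : 0 < (W 0).card := Finset.card_pos.2 ⟨b, hbW 0⟩
      omega
    | succ r ih =>
      intro hdisj
      have hdr : Disjoint (U r) (W r) :=
        Disjoint.mono (hUmono r) (hWmono r) hdisj
      have := growth r hdr
      have := ih hdr
      omega
  by_cases hdisj : Disjoint (U n) (W n)
  · exfalso
    have h1 := main n hdisj
    have h2 : (U n).card + (W n).card ≤ m := by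
      rw [← Finset.card_union_of_disjoint hdisj]
      calc ((U n) ∪ (W n)).card ≤ Finset.univ.card := Finset.card_le_card (Finset.subset_univ _)
        _ = m := by simp
    omega
  · rw [Finset.not_disjoint_iff] at hdisj
    obtain ⟨k, hkU, hkW⟩ := hdisj
    exact ⟨k, (hUmem n k).1 hkU, (hWmem n k).1 hkW⟩

end Scramble


open MeasureTheory intervalIntegral Set

section FTC

lemma meas_bdd_integrable {f : ℝ → ℝ} {a b C : ℝ} (hab : a ≤ b)
    (hf : AEStronglyMeasurable f (volume.restrict (Set.Ioc a b)))
    (hC : ∀ t ∈ Set.Ioc a b, |f t| ≤ C) :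
    IntervalIntegrable f volume a b := by
  rw [intervalIntegrable_iff_integrableOn_Ioc_of_le hab]
  refine Integrable.mono' (g := fun _ => C) ?_ hf ?_
  · exact integrableOn_const measure_Ioc_lt_top.ne
  · exact (ae_restrict_iff' measurableSet_Ioc).2 (Filter.Eventually.of_forall hC)

lemma ftc_le {g g' ρ : ℝ → ℝ} {a b : ℝ} (hab : a ≤ b)
    (hg : ∀ t ∈ Set.Icc a b, HasDerivAt g (g' t) t)
    (hint : IntervalIntegrable g' volume a b)
    (hρ : IntervalIntegrable ρ volume a b)
    (hle : ∀ t ∈ Set.Icc a b, g' t ≤ ρ t) :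
    g b ≤ g a + ∫ t in a..b, ρ t := by
  have h1 : ∫ t in a..b, g' t = g b - g a := by
    apply integral_eq_sub_of_hasDerivAt _ hint
    intro x hx
    exact hg x (by rwa [Set.uIcc_of_le hab] at hx)
  have h2 : ∫ t in a..b, g' t ≤ ∫ t in a..b, ρ t :=
    integral_mono_on hab hint hρ hle
  linarith

lemma ftc_ge {g g' ρ : ℝ → ℝ} {a b : ℝ} (hab : a ≤ b)
    (hg : ∀ t ∈ Set.Icc a b, HasDerivAt g (g' t) t)
    (hint : IntervalIntegrable g' volume a b)
    (hρ : IntervalIntegrable ρ volume a b)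
    (hle : ∀ t ∈ Set.Icc a b, ρ t ≤ g' t) :
    g a + ∫ t in a..b, ρ t ≤ g b := by
  have h1 : ∫ t in a..b, g' t = g b - g a := by
    apply integral_eq_sub_of_hasDerivAt _ hint
    intro x hx
    exact hg x (by rwa [Set.uIcc_of_le hab] at hx)
  have h2 : ∫ t in a..b, ρ t ≤ ∫ t in a..b, g' t :=
    integral_mono_on hab hρ hint hle
  linarith

end FTC

section ODE

variable {m : ℕ} {L : ℝ → Matrix (Fin m) (Fin m) ℝ} {M₁ : ℝ}
  {V : ℝ → ℝ → Matrix (Fin m) (Fin m) ℝ}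

/-- Rows of `L` sum to zero (for `t ≥ 0`). -/
lemma Lrowsum (hdiag : ∀ t, 0 ≤ t → ∀ i, L t i i = -∑ j ∈ ({i}ᶜ : Finset (Fin m)), L t i j)
    {t : ℝ} (ht : 0 ≤ t) (i : Fin m) : ∑ k, L t i k = 0 := by
  classical
  have h := Finset.sum_compl_add_sum ({i} : Finset (Fin m)) (fun k => L t i k)
  rw [Finset.sum_singleton] at h
  rw [← h, hdiag t ht i]
  ring

/-- Continuity of `t ↦ V t t0 i j` on `[t0, ∞)`. -/
lemma contV (hVd : ∀ t0, 0 ≤ t0 → ∀ t ∈ Set.Ici t0, ∀ i j,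
      HasDerivAt (fun τ => V τ t0 i j) (∑ k, L t i k * V t t0 k j) t)
    {t0 : ℝ} (ht0 : 0 ≤ t0) (i j : Fin m) :
    ContinuousOn (fun t => V t t0 i j) (Set.Ici t0) :=
  fun t ht => ((hVd t0 ht0 t ht i j).continuousAt).continuousWithinAt

/-- Uniqueness (Gronwall): two solutions of `u' = L u` on `[s,b]` that agree at `s` agree. -/
lemma uniqODE (hM₁ : 0 < M₁)
    (hbdd : ∀ t, 0 ≤ t → ∀ i j, |L t i j| ≤ M₁)
    {s b : ℝ} (hs : 0 ≤ s) (hsb : s ≤ b)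
    {w v : ℝ → Fin m → ℝ}
    (hw : ∀ t ∈ Set.Icc s b, ∀ i, HasDerivAt (fun τ => w τ i) (∑ k, L t i k * w t k) t)
    (hv : ∀ t ∈ Set.Icc s b, ∀ i, HasDerivAt (fun τ => v τ i) (∑ k, L t i k * v t k) t)
    (h0 : w s = v s) : ∀ t ∈ Set.Icc s b, w t = v t := by
  classical
  set f : ℝ → (Fin m → ℝ) := fun t => w t - v t with hf
  set K : ℝ := (m : ℝ) * M₁ with hK
  have hKpos : 0 ≤ K := mul_nonneg (Nat.cast_nonneg m) hM₁.le
  have hfd : ∀ t ∈ Set.Icc s b,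
      HasDerivAt f (fun i => ∑ k, L t i k * f t k) t := by
    intro t ht
    rw [hasDerivAt_pi]
    intro i
    have := ((hw t ht i).sub (hv t ht i))
    convert this using 1
    rfl
    rw [← Finset.sum_sub_distrib]
    apply Finset.sum_congr rfl; intro k _
    simp only [hf, Pi.sub_apply]
    ring
  have hcont : ContinuousOn f (Set.Icc s b) :=
    fun t ht => ((hfd t ht).continuousAt).continuousWithinAt
  have hbound : ∀ t ∈ Set.Ico s b, ‖(fun i => ∑ k, L t i k * f t k : Fin m → ℝ)‖
      ≤ K * ‖f t‖ + 0 := by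
    intro t ht
    rw [add_zero]
    have ht0 : (0:ℝ) ≤ t := le_trans hs ht.1
    apply pi_norm_le_iff_of_nonneg (mul_nonneg hKpos (norm_nonneg _)) |>.2
    intro i
    calc ‖∑ k, L t i k * f t k‖
        ≤ ∑ k, ‖L t i k * f t k‖ := norm_sum_le _ _
      _ ≤ ∑ _k : Fin m, M₁ * ‖f t‖ := by
          apply Finset.sum_le_sum; intro k _
          rw [norm_mul]
          apply mul_le_mul (hbdd t ht0 i k) (norm_le_pi_norm (f t) k) (norm_nonneg _) hM₁.le
      _ = K * ‖f t‖ := by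
          rw [Finset.sum_const, Finset.card_univ, Fintype.card_fin, nsmul_eq_mul, hK]
          ring
  have hzero : ∀ t ∈ Set.Icc s b, ‖f t‖ ≤ 0 := by
    intro t ht
    have := norm_le_gronwallBound_of_norm_deriv_right_le (δ := 0) (K := K) (ε := 0) hcont
      (fun x hx => (hfd x (Set.mem_Icc.2 ⟨hx.1, hx.2.le⟩)).hasDerivWithinAt)
      (by simp [hf, h0]) hbound t ht
    rwa [gronwallBound_ε0, zero_mul] at this
  intro t ht
  have : f t = 0 := by
    have := le_antisymm (hzero t ht) (norm_nonneg _)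
    exact norm_eq_zero.1 this
  have : w t - v t = 0 := this
  funext i
  have := congrFun this i
  simpa [sub_eq_zero] using this

end ODE

open MeasureTheory intervalIntegral Set

section ODE2

variable {m : ℕ} {L : ℝ → Matrix (Fin m) (Fin m) ℝ} {M₁ : ℝ}
  {V : ℝ → ℝ → Matrix (Fin m) (Fin m) ℝ}

/-- Row sums of `V t t0` equal 1. -/
lemma rowsumV (hM₁ : 0 < M₁)
    (hdiag : ∀ t, 0 ≤ t → ∀ i, L t i i = -∑ j ∈ ({i}ᶜ : Finset (Fin m)), L t i j)
    (hbdd : ∀ t, 0 ≤ t → ∀ i j, |L t i j| ≤ M₁)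
    (hV0 : ∀ t0, 0 ≤ t0 → V t0 t0 = 1)
    (hVd : ∀ t0, 0 ≤ t0 → ∀ t ∈ Set.Ici t0, ∀ i j,
        HasDerivAt (fun τ => V τ t0 i j) (∑ k, L t i k * V t t0 k j) t)
    {t0 t : ℝ} (ht0 : 0 ≤ t0) (ht : t0 ≤ t) (i : Fin m) :
    ∑ k, V t t0 i k = 1 := by
  classical
  set w : ℝ → Fin m → ℝ := fun τ i => ∑ k, V τ t0 i k with hw
  set v : ℝ → Fin m → ℝ := fun _ _ => 1 with hv
  have key := uniqODE (L := L) hM₁ hbdd ht0 ht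
    (w := w) (v := v) ?_ ?_ ?_ t (Set.mem_Icc.2 ⟨ht, le_refl t⟩)
  · exact congrFun key i
  · -- derivative of w
    intro τ hτ i
    have hτ' : τ ∈ Set.Ici t0 := hτ.1
    have hd : HasDerivAt (fun σ => ∑ k, V σ t0 i k)
        (∑ k, ∑ l, L τ i l * V τ t0 l k) τ :=
      HasDerivAt.fun_sum (fun k _ => hVd t0 ht0 τ hτ' i k)
    convert hd using 1
    rw [Finset.sum_comm]
    apply Finset.sum_congr rfl; intro l _
    rw [← Finset.mul_sum]
  · -- derivative of v (constant)
    intro τ hτ i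
    have hτ0 : (0:ℝ) ≤ τ := le_trans ht0 hτ.1
    have : (∑ k, L τ i k * v τ k) = 0 := by
      simp only [hv, mul_one]
      exact Lrowsum hdiag hτ0 i
    rw [this]
    exact hasDerivAt_const τ 1
  · funext i
    simp only [hw, hv, hV0 t0 ht0, Matrix.one_apply]
    rw [Finset.sum_ite_eq]
    simp

/-- Cocycle property. -/
lemma cocycleV (hM₁ : 0 < M₁)
    (hbdd : ∀ t, 0 ≤ t → ∀ i j, |L t i j| ≤ M₁)
    (hV0 : ∀ t0, 0 ≤ t0 → V t0 t0 = 1)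
    (hVd : ∀ t0, 0 ≤ t0 → ∀ t ∈ Set.Ici t0, ∀ i j,
        HasDerivAt (fun τ => V τ t0 i j) (∑ k, L t i k * V t t0 k j) t)
    {t0 s t : ℝ} (ht0 : 0 ≤ t0) (hs : t0 ≤ s) (hst : s ≤ t) (i j : Fin m) :
    V t t0 i j = ∑ k, V t s i k * V s t0 k j := by
  classical
  have hs0 : (0:ℝ) ≤ s := le_trans ht0 hs
  set w : ℝ → Fin m → ℝ := fun τ i => V τ t0 i j with hw
  set v : ℝ → Fin m → ℝ := fun τ i => ∑ k, V τ s i k * V s t0 k j with hv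
  have key := uniqODE (L := L) hM₁ hbdd hs0 hst
    (w := w) (v := v) ?_ ?_ ?_ t (Set.mem_Icc.2 ⟨hst, le_refl t⟩)
  · exact congrFun key i
  · intro τ hτ i
    exact hVd t0 ht0 τ (le_trans hs hτ.1) i j
  · intro τ hτ i
    have hd : HasDerivAt (fun σ => ∑ k, V σ s i k * V s t0 k j)
        (∑ k, (∑ l, L τ i l * V τ s l k) * V s t0 k j) τ :=
      HasDerivAt.fun_sum (fun k _ => (hVd s hs0 τ hτ.1 i k).mul_const _)
    convert hd using 1
    simp only [hv]
    calc ∑ k, L τ i k * ∑ l, V τ s k l * V s t0 l j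
        = ∑ k, ∑ l, L τ i k * (V τ s k l * V s t0 l j) := by
          apply Finset.sum_congr rfl; intro k _; rw [Finset.mul_sum]
      _ = ∑ l, ∑ k, L τ i k * (V τ s k l * V s t0 l j) := Finset.sum_comm
      _ = ∑ k, (∑ l, L τ i l * V τ s l k) * V s t0 k j := by
          apply Finset.sum_congr rfl; intro k _
          rw [Finset.sum_mul]
          apply Finset.sum_congr rfl; intro l _; ring
  · funext i
    simp only [hw, hv, hV0 s hs0, Matrix.one_apply]
    have : ∀ k, (if i = k then (1:ℝ) else 0) * V s t0 k j
        = if i = k then V s t0 k j else 0 := by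
      intro k; split <;> simp
    simp only [this]
    rw [Finset.sum_ite_eq]
    simp

end ODE2

section Nonneg

variable {m : ℕ} {L : ℝ → Matrix (Fin m) (Fin m) ℝ} {M₁ : ℝ}
  {V : ℝ → ℝ → Matrix (Fin m) (Fin m) ℝ}

lemma Vnonneg (hM₁ : 0 < M₁)
    (hoff : ∀ t, 0 ≤ t → ∀ i j, i ≠ j → 0 ≤ L t i j)
    (hdiag : ∀ t, 0 ≤ t → ∀ i, L t i i = -∑ j ∈ ({i}ᶜ : Finset (Fin m)), L t i j)
    (hV0 : ∀ t0, 0 ≤ t0 → V t0 t0 = 1)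
    (hVd : ∀ t0, 0 ≤ t0 → ∀ t ∈ Set.Ici t0, ∀ i j,
        HasDerivAt (fun τ => V τ t0 i j) (∑ k, L t i k * V t t0 k j) t)
    {t0 t : ℝ} (ht0 : 0 ≤ t0) (ht : t0 ≤ t) (i j : Fin m) :
    0 ≤ V t t0 i j := by
  classical
  set K : ℝ := M₁ + 1 with hK
  -- main claim, for every ε > 0
  have hclaim : ∀ ε > (0:ℝ), ∀ τ ∈ Set.Icc t0 t, ∀ k, 0 <
      Real.exp (M₁ * (τ - t0)) * V τ t0 k j + ε * Real.exp (K * (τ - t0)) := by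
    intro ε hε
    set z : ℝ → Fin m → ℝ := fun τ k =>
      Real.exp (M₁ * (τ - t0)) * V τ t0 k j + ε * Real.exp (K * (τ - t0)) with hz
    show ∀ τ ∈ Set.Icc t0 t, ∀ k, 0 < z τ k
    by_contra hcon
    push_neg at hcon
    obtain ⟨τ₁, hτ₁, k₁, hk₁⟩ := hcon
    set S : Set ℝ := {τ ∈ Set.Icc t0 t | ∃ k, z τ k ≤ 0} with hS
    have hSne : S.Nonempty := ⟨τ₁, hτ₁, k₁, hk₁⟩
    -- continuity of each component of z on [t0, t]
    have hexpM : Continuous (fun τ : ℝ => Real.exp (M₁ * (τ - t0))) :=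
      Real.continuous_exp.comp (continuous_const.mul (continuous_id.sub continuous_const))
    have hexpK : Continuous (fun τ : ℝ => Real.exp (K * (τ - t0))) :=
      Real.continuous_exp.comp (continuous_const.mul (continuous_id.sub continuous_const))
    have hzc : ∀ k, ContinuousOn (fun τ => z τ k) (Set.Icc t0 t) := by
      intro k
      apply ContinuousOn.add
      · exact hexpM.continuousOn.mul
          (((contV (L := L) hVd ht0 k j)).mono Set.Icc_subset_Ici_self)
      · exact (continuous_const.mul hexpK).continuousOn
    have hSclosed : IsClosed S := by
      have : S = ⋃ k : Fin m, (Set.Icc t0 t ∩ (fun τ => z τ k) ⁻¹' Set.Iic 0) := by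
        ext τ
        simp only [hS, Set.mem_setOf_eq, Set.mem_iUnion, Set.mem_inter_iff,
          Set.mem_preimage, Set.mem_Iic]
        tauto
      rw [this]
      exact isClosed_iUnion_of_finite fun k =>
        (hzc k).preimage_isClosed_of_isClosed isClosed_Icc isClosed_Iic
    set s := sInf S with hs
    have hsS : s ∈ S := hSclosed.csInf_mem hSne ⟨t0, fun x hx => hx.1.1⟩
    obtain ⟨hsIcc, k0, hk0⟩ := hsS
    have hs0 : (0:ℝ) ≤ s := le_trans ht0 hsIcc.1
    -- z is positive at t0
    have hzt0 : ∀ k, 0 < z t0 k := by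
      intro k
      simp only [hz, sub_self, mul_zero, Real.exp_zero, mul_one, hV0 t0 ht0,
        Matrix.one_apply]
      split <;> [linarith; linarith]
    have ht0s : t0 < s := by
      rcases lt_or_eq_of_le hsIcc.1 with h | h
      · exact h
      · exact absurd hk0 (by rw [← h]; exact not_le.2 (hzt0 k0))
    -- z positive strictly before s
    have hbefore : ∀ τ ∈ Set.Ico t0 s, ∀ k, 0 < z τ k := by
      intro τ hτ k
      by_contra hcon2
      push_neg at hcon2
      have hτS : τ ∈ S := ⟨⟨hτ.1, le_trans hτ.2.le hsIcc.2⟩, k, hcon2⟩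
      have := csInf_le ⟨t0, fun x hx => hx.1.1⟩ hτS
      rw [← hs] at this
      exact absurd this (not_le.2 hτ.2)
    -- derivative data at points of [t0, t]
    have hzd : ∀ τ ∈ Set.Icc t0 t, ∀ k, HasDerivAt (fun σ => z σ k)
        ((Real.exp (M₁ * (τ - t0)) * M₁) * V τ t0 k j
          + Real.exp (M₁ * (τ - t0)) * (∑ l, L τ k l * V τ t0 l j)
          + ε * (Real.exp (K * (τ - t0)) * K)) τ := by
      intro τ hτ k
      have e0 : HasDerivAt (fun σ : ℝ => M₁ * (σ - t0)) M₁ τ := by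
        simpa using ((hasDerivAt_id τ).sub_const t0).const_mul M₁
      have e0' : HasDerivAt (fun σ : ℝ => K * (σ - t0)) K τ := by
        simpa using ((hasDerivAt_id τ).sub_const t0).const_mul K
      have e1 := e0.exp
      have e2 := hVd t0 ht0 τ hτ.1 k j
      have e3 := (e0'.exp).const_mul ε
      exact (e1.mul e2).add e3
    -- all components of z are ≥ 0 at s
    have hznn : ∀ k, 0 ≤ z s k := by
      intro k
      by_contra hcon3
      push_neg at hcon3
      have hca : ContinuousAt (fun τ => z τ k) s := (hzd s hsIcc k).continuousAt
      have hev : ∀ᶠ τ in nhdsWithin s (Set.Iio s), z τ k < 0 :=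
        (hca.eventually_lt_const hcon3).filter_mono nhdsWithin_le_nhds
      have hmem : Set.Ioo t0 s ∈ nhdsWithin s (Set.Iio s) :=
        Ioo_mem_nhdsLT_of_mem ⟨ht0s, le_refl s⟩
      have hevent : ∀ᶠ τ in nhdsWithin s (Set.Iio s), z τ k < 0 ∧ τ ∈ Set.Ioo t0 s :=
        hev.and (Filter.eventually_of_mem hmem (fun x hx => hx))
      haveI := nhdsLT_neBot s
      obtain ⟨τ, hτ1, hτ2⟩ := hevent.exists
      exact absurd hτ1 (not_lt.2 (hbefore τ ⟨hτ2.1.le, hτ2.2⟩ k).le)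
    have hzs0 : z s k0 = 0 := le_antisymm hk0 (hznn k0)
    -- value of V at (s, k0) and lower bound for other components
    set eM := Real.exp (M₁ * (s - t0)) with heM
    set eK := Real.exp (K * (s - t0)) with heK
    have heMpos : 0 < eM := Real.exp_pos _
    have heKpos : 0 < eK := Real.exp_pos _
    have hVk0 : V s t0 k0 j = -(ε * eK) / eM := by
      have : eM * V s t0 k0 j + ε * eK = 0 := hzs0
      field_simp
      linarith
    have hVl : ∀ l, -(ε * eK) / eM ≤ V s t0 l j := by
      intro l
      have h1 : 0 ≤ eM * V s t0 l j + ε * eK := hznn l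
      rw [div_le_iff₀ heMpos]
      nlinarith
    -- the sum ∑ L V at (s, k0) is nonneg
    have hsum0 : 0 ≤ ∑ l, L s k0 l * V s t0 l j := by
      have key : ∀ l, L s k0 l * (-(ε * eK) / eM) ≤ L s k0 l * V s t0 l j := by
        intro l
        by_cases hlk : l = k0
        · subst hlk; rw [hVk0]
        · exact mul_le_mul_of_nonneg_left (hVl l)
            (hoff s hs0 k0 l (fun h => hlk h.symm))
      calc (0:ℝ) = ∑ l, L s k0 l * (-(ε * eK) / eM) := by
            rw [← Finset.sum_mul, Lrowsum hdiag hs0 k0, zero_mul]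
        _ ≤ ∑ l, L s k0 l * V s t0 l j := Finset.sum_le_sum (fun l _ => key l)
    -- derivative at s is strictly positive
    set D := (eM * M₁) * V s t0 k0 j + eM * (∑ l, L s k0 l * V s t0 l j)
        + ε * (eK * K) with hD
    have hDpos : 0 < D := by
      have h1 : (eM * M₁) * V s t0 k0 j = -(M₁ * (ε * eK)) := by
        rw [hVk0]; field_simp
      have h2 : 0 ≤ eM * (∑ l, L s k0 l * V s t0 l j) := mul_nonneg heMpos.le hsum0
      have h3 : ε * (eK * K) = M₁ * (ε * eK) + ε * eK := by rw [hK]; ring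
      rw [hD, h1, h3]
      nlinarith
    -- contradiction via the slope
    have hDd : HasDerivAt (fun σ => z σ k0) D s := hzd s hsIcc k0
    have hslope := hasDerivAt_iff_tendsto_slope.1 hDd
    have hevpos : ∀ᶠ τ in nhdsWithin s {s}ᶜ, 0 < slope (fun σ => z σ k0) s τ :=
      hslope.eventually_const_lt hDpos
    have hle : nhdsWithin s (Set.Iio s) ≤ nhdsWithin s {s}ᶜ :=
      nhdsWithin_mono s (fun x hx => ne_of_lt hx)
    have hmem : Set.Ioo t0 s ∈ nhdsWithin s (Set.Iio s) :=
      Ioo_mem_nhdsLT_of_mem ⟨ht0s, le_refl s⟩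
    have hboth : ∀ᶠ τ in nhdsWithin s (Set.Iio s),
        0 < slope (fun σ => z σ k0) s τ ∧ τ ∈ Set.Ioo t0 s :=
      (hevpos.filter_mono hle).and (Filter.eventually_of_mem hmem (fun x hx => hx))
    haveI := nhdsLT_neBot s
    obtain ⟨τ, hτpos, hτIoo⟩ := hboth.exists
    rw [slope_def_field, hzs0, sub_zero] at hτpos
    have hτs : τ - s < 0 := sub_neg.2 hτIoo.2
    have hzτ : z τ k0 < 0 := by
      have h5 := mul_neg_of_pos_of_neg hτpos hτs
      rwa [div_mul_cancel₀ _ (by linarith : τ - s ≠ 0)] at h5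
    exact absurd hzτ (not_lt.2 (hbefore τ ⟨hτIoo.1.le, hτIoo.2⟩ k0).le)
  -- conclude: let ε → 0
  by_contra hneg
  push_neg at hneg
  set ε := (-(V t t0 i j)) * Real.exp (M₁ * (t - t0)) * Real.exp (-(K * (t - t0))) / 2
    with hε
  have hεpos : 0 < ε := by
    apply div_pos _ two_pos
    apply mul_pos (mul_pos (by linarith) (Real.exp_pos _)) (Real.exp_pos _)
  have hfin := hclaim ε hεpos t (Set.mem_Icc.2 ⟨ht, le_refl t⟩) i
  rw [hε] at hfin
  have hexps : Real.exp (-(K * (t - t0))) * Real.exp (K * (t - t0)) = 1 := by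
    rw [← Real.exp_add]; simp
  have h4 : -V t t0 i j * Real.exp (M₁ * (t - t0)) * Real.exp (-(K * (t - t0))) / 2
      * Real.exp (K * (t - t0))
      = -(Real.exp (M₁ * (t - t0)) * V t t0 i j) / 2 := by
    calc -V t t0 i j * Real.exp (M₁ * (t - t0)) * Real.exp (-(K * (t - t0))) / 2
        * Real.exp (K * (t - t0))
        = (-V t t0 i j * Real.exp (M₁ * (t - t0)))
          * (Real.exp (-(K * (t - t0))) * Real.exp (K * (t - t0))) / 2 := by ring
      _ = -(Real.exp (M₁ * (t - t0)) * V t t0 i j) / 2 := by rw [hexps]; ring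
  have h5 : Real.exp (M₁ * (t - t0)) * V t t0 i j < 0 :=
    mul_neg_of_pos_of_neg (Real.exp_pos _) hneg
  rw [h4] at hfin
  linarith

end Nonneg

section Bounds

variable {m : ℕ} {L : ℝ → Matrix (Fin m) (Fin m) ℝ} {M₁ : ℝ}
  {V : ℝ → ℝ → Matrix (Fin m) (Fin m) ℝ}

-- abbreviated hypothesis bundle
variable (hM₁ : 0 < M₁)
  (hmeas : ∀ i j, Measurable fun t => L t i j)
  (hoff : ∀ t, 0 ≤ t → ∀ i j, i ≠ j → 0 ≤ L t i j)
  (hdiag : ∀ t, 0 ≤ t → ∀ i, L t i i = -∑ j ∈ ({i}ᶜ : Finset (Fin m)), L t i j)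
  (hbdd : ∀ t, 0 ≤ t → ∀ i j, |L t i j| ≤ M₁)
  (hV0 : ∀ t0, 0 ≤ t0 → V t0 t0 = 1)
  (hVd : ∀ t0, 0 ≤ t0 → ∀ t ∈ Set.Ici t0, ∀ i j,
      HasDerivAt (fun τ => V τ t0 i j) (∑ k, L t i k * V t t0 k j) t)

include hM₁ hoff hdiag hbdd hV0 hVd in
lemma Vle1 {t0 t : ℝ} (ht0 : 0 ≤ t0) (ht : t0 ≤ t) (i j : Fin m) :
    V t t0 i j ≤ 1 := by
  have h1 := rowsumV (L := L) hM₁ hdiag hbdd hV0 hVd ht0 ht i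
  rw [← h1]
  exact Finset.single_le_sum
    (fun k _ => Vnonneg (L := L) hM₁ hoff hdiag hV0 hVd ht0 ht i k) (Finset.mem_univ j)

include hVd in
lemma aesmV {t0 a b : ℝ} (ht0 : 0 ≤ t0) (ha : t0 ≤ a) (i j : Fin m) :
    MeasureTheory.AEStronglyMeasurable (fun τ => V τ t0 i j)
      (MeasureTheory.volume.restrict (Set.Ioc a b)) := by
  apply ContinuousOn.aestronglyMeasurable _ measurableSet_Ioc
  exact (contV (L := L) hVd ht0 i j).mono
    (fun x hx => le_trans ha hx.1.le)

include hM₁ hmeas hbdd in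
lemma Lintegrable {a b : ℝ} (ha : 0 ≤ a) (hab : a ≤ b) (i j : Fin m) :
    IntervalIntegrable (fun τ => L τ i j) MeasureTheory.volume a b := by
  apply meas_bdd_integrable hab ((hmeas i j).aestronglyMeasurable.restrict)
  intro τ hτ
  exact hbdd τ (le_trans ha hτ.1.le) i j

include hVd in
lemma gderiv {t0 τ : ℝ} (ht0 : 0 ≤ t0) (hτ : t0 ≤ τ) (i j : Fin m) :
    HasDerivAt (fun σ => Real.exp (M₁ * (σ - t0)) * V σ t0 i j)
      ((Real.exp (M₁ * (τ - t0)) * M₁) * V τ t0 i j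
        + Real.exp (M₁ * (τ - t0)) * (∑ l, L τ i l * V τ t0 l j)) τ := by
  have e0 : HasDerivAt (fun σ : ℝ => M₁ * (σ - t0)) M₁ τ := by
    simpa using ((hasDerivAt_id τ).sub_const t0).const_mul M₁
  exact (e0.exp).mul (hVd t0 ht0 τ hτ i j)

include hM₁ hmeas hoff hdiag hbdd hV0 hVd in
lemma gprime_integrable {t0 a b : ℝ} (ht0 : 0 ≤ t0) (ha : t0 ≤ a) (hab : a ≤ b)
    (i j : Fin m) :
    IntervalIntegrable (fun τ => (Real.exp (M₁ * (τ - t0)) * M₁) * V τ t0 i j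
        + Real.exp (M₁ * (τ - t0)) * (∑ l, L τ i l * V τ t0 l j))
      MeasureTheory.volume a b := by
  have hexp : Continuous (fun τ : ℝ => Real.exp (M₁ * (τ - t0))) :=
    Real.continuous_exp.comp (continuous_const.mul (continuous_id.sub continuous_const))
  apply meas_bdd_integrable hab
    (C := Real.exp (M₁ * (b - t0)) * M₁ + Real.exp (M₁ * (b - t0)) * ((m : ℝ) * M₁))
  · apply MeasureTheory.AEStronglyMeasurable.add
    · exact ((hexp.mul continuous_const).aestronglyMeasurable.restrict).mul
        (aesmV (L := L) hVd ht0 ha i j)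
    · apply (hexp.aestronglyMeasurable.restrict).mul
      apply Finset.aestronglyMeasurable_fun_sum
      intro l _
      exact ((hmeas i l).aestronglyMeasurable.restrict).mul
        (aesmV (L := L) hVd ht0 ha l j)
  · intro τ hτ
    have hτ0 : t0 ≤ τ := le_trans ha hτ.1.le
    have hτ0' : (0:ℝ) ≤ τ := le_trans ht0 hτ0
    have hexple : Real.exp (M₁ * (τ - t0)) ≤ Real.exp (M₁ * (b - t0)) := by
      apply Real.exp_le_exp.2
      apply mul_le_mul_of_nonneg_left _ hM₁.le
      linarith [hτ.2]
    have hexppos : (0:ℝ) < Real.exp (M₁ * (τ - t0)) := Real.exp_pos _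
    have hV01 : ∀ l, 0 ≤ V τ t0 l j ∧ V τ t0 l j ≤ 1 := fun l =>
      ⟨Vnonneg (L := L) hM₁ hoff hdiag hV0 hVd ht0 hτ0 l j,
       Vle1 (L := L) hM₁ hoff hdiag hbdd hV0 hVd ht0 hτ0 l j⟩
    have habs1 : |(Real.exp (M₁ * (τ - t0)) * M₁) * V τ t0 i j|
        ≤ Real.exp (M₁ * (b - t0)) * M₁ := by
      rw [abs_mul, abs_of_nonneg (mul_nonneg hexppos.le hM₁.le),
        abs_of_nonneg (hV01 i).1]
      calc Real.exp (M₁ * (τ - t0)) * M₁ * V τ t0 i j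
          ≤ Real.exp (M₁ * (τ - t0)) * M₁ * 1 :=
            mul_le_mul_of_nonneg_left (hV01 i).2 (mul_nonneg hexppos.le hM₁.le)
        _ ≤ Real.exp (M₁ * (b - t0)) * M₁ := by
            rw [mul_one]; exact mul_le_mul_of_nonneg_right hexple hM₁.le
    have habs2 : |Real.exp (M₁ * (τ - t0)) * (∑ l, L τ i l * V τ t0 l j)|
        ≤ Real.exp (M₁ * (b - t0)) * ((m:ℝ) * M₁) := by
      rw [abs_mul, abs_of_nonneg hexppos.le]
      have hsum : |∑ l, L τ i l * V τ t0 l j| ≤ (m:ℝ) * M₁ := by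
        calc |∑ l, L τ i l * V τ t0 l j| ≤ ∑ l, |L τ i l * V τ t0 l j| :=
              Finset.abs_sum_le_sum_abs _ _
          _ ≤ ∑ _l : Fin m, M₁ := by
              apply Finset.sum_le_sum; intro l _
              rw [abs_mul]
              calc |L τ i l| * |V τ t0 l j| ≤ M₁ * 1 := by
                    apply mul_le_mul (hbdd τ hτ0' i l) _ (abs_nonneg _) hM₁.le
                    rw [abs_of_nonneg (hV01 l).1]; exact (hV01 l).2
                _ = M₁ := mul_one M₁
          _ = (m:ℝ) * M₁ := by
              rw [Finset.sum_const, Finset.card_univ, Fintype.card_fin, nsmul_eq_mul]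
      exact mul_le_mul hexple hsum (abs_nonneg _) (Real.exp_pos _).le
    exact le_trans (abs_add_le _ _) (add_le_add habs1 habs2)

include hM₁ hmeas hoff hdiag hbdd hV0 hVd in
lemma Vdiag_lower {t0 t : ℝ} (ht0 : 0 ≤ t0) (ht : t0 ≤ t) (i : Fin m) :
    Real.exp (-(M₁ * (t - t0))) ≤ V t t0 i i := by
  classical
  have key : (fun σ => Real.exp (M₁ * (σ - t0)) * V σ t0 i i) t0
      + ∫ τ in t0..t, (0:ℝ) ≤ (fun σ => Real.exp (M₁ * (σ - t0)) * V σ t0 i i) t := by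
    apply ftc_ge ht (fun τ hτ => gderiv (L := L) hVd ht0 hτ.1 i i)
      (gprime_integrable (L := L) hM₁ hmeas hoff hdiag hbdd hV0 hVd ht0 (le_refl t0) ht i i)
      intervalIntegrable_const
    intro τ hτ
    have hτ0 : (0:ℝ) ≤ τ := le_trans ht0 hτ.1
    have hVnn : ∀ l, 0 ≤ V τ t0 l i := fun l =>
      Vnonneg (L := L) hM₁ hoff hdiag hV0 hVd ht0 hτ.1 l i
    have hsplit := Finset.sum_compl_add_sum ({i} : Finset (Fin m))
      (fun l => L τ i l * V τ t0 l i)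
    rw [Finset.sum_singleton] at hsplit
    have hcompl : 0 ≤ ∑ l ∈ ({i} : Finset (Fin m))ᶜ, L τ i l * V τ t0 l i := by
      apply Finset.sum_nonneg; intro l hl
      rw [Finset.mem_compl, Finset.mem_singleton] at hl
      exact mul_nonneg (hoff τ hτ0 i l (fun h => hl h.symm)) (hVnn l)
    have hLii : -M₁ ≤ L τ i i := neg_le_of_abs_le (hbdd τ hτ0 i i)
    have hterm : -(M₁ * V τ t0 i i) ≤ L τ i i * V τ t0 i i := by
      rw [neg_mul_eq_neg_mul]
      exact mul_le_mul_of_nonneg_right hLii (hVnn i)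
    have hsum : -(M₁ * V τ t0 i i) ≤ ∑ l, L τ i l * V τ t0 l i := by
      rw [← hsplit]; linarith
    have := mul_le_mul_of_nonneg_left hsum (Real.exp_pos (M₁ * (τ - t0))).le
    nlinarith [Real.exp_pos (M₁ * (τ - t0))]
  simp only [sub_self, mul_zero, Real.exp_zero, one_mul, intervalIntegral.integral_zero,
    add_zero, hV0 t0 ht0, Matrix.one_apply_eq] at key
  rw [Real.exp_neg, inv_eq_one_div, div_le_iff₀ (Real.exp_pos _)]
  nlinarith [Real.exp_pos (M₁ * (t - t0))]

include hM₁ hmeas hoff hdiag hbdd hV0 hVd in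
lemma Vedge_lower {t0 t : ℝ} (ht0 : 0 ≤ t0) (ht : t0 ≤ t) {i j : Fin m} (hij : i ≠ j) :
    Real.exp (-(M₁ * (t - t0))) * ∫ τ in t0..t, L τ i j ≤ V t t0 i j := by
  classical
  have key : (fun σ => Real.exp (M₁ * (σ - t0)) * V σ t0 i j) t0
      + ∫ τ in t0..t, L τ i j ≤ (fun σ => Real.exp (M₁ * (σ - t0)) * V σ t0 i j) t := by
    apply ftc_ge ht (fun τ hτ => gderiv (L := L) hVd ht0 hτ.1 i j)
      (gprime_integrable (L := L) hM₁ hmeas hoff hdiag hbdd hV0 hVd ht0 (le_refl t0) ht i j)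
      (Lintegrable (L := L) hM₁ hmeas hbdd ht0 ht i j)
    intro τ hτ
    have hτ0 : (0:ℝ) ≤ τ := le_trans ht0 hτ.1
    have hVnn : ∀ l, 0 ≤ V τ t0 l j := fun l =>
      Vnonneg (L := L) hM₁ hoff hdiag hV0 hVd ht0 hτ.1 l j
    have hsplit := Finset.sum_compl_add_sum ({i, j} : Finset (Fin m))
      (fun l => L τ i l * V τ t0 l j)
    rw [Finset.sum_pair hij] at hsplit
    have hcompl : 0 ≤ ∑ l ∈ ({i, j} : Finset (Fin m))ᶜ, L τ i l * V τ t0 l j := by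
      apply Finset.sum_nonneg; intro l hl
      rw [Finset.mem_compl, Finset.mem_insert, Finset.mem_singleton] at hl
      push_neg at hl
      exact mul_nonneg (hoff τ hτ0 i l (fun h => hl.1 h.symm)) (hVnn l)
    have hLii : -M₁ ≤ L τ i i := neg_le_of_abs_le (hbdd τ hτ0 i i)
    have hterm : -(M₁ * V τ t0 i j) ≤ L τ i i * V τ t0 i j := by
      rw [neg_mul_eq_neg_mul]
      exact mul_le_mul_of_nonneg_right hLii (hVnn i)
    have hdiagl : Real.exp (-(M₁ * (τ - t0))) ≤ V τ t0 j j :=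
      Vdiag_lower (L := L) hM₁ hmeas hoff hdiag hbdd hV0 hVd ht0 hτ.1 j
    have hLij : 0 ≤ L τ i j := hoff τ hτ0 i j hij
    have hterm2 : L τ i j * Real.exp (-(M₁ * (τ - t0))) ≤ L τ i j * V τ t0 j j :=
      mul_le_mul_of_nonneg_left hdiagl hLij
    have hsum : -(M₁ * V τ t0 i j) + L τ i j * Real.exp (-(M₁ * (τ - t0)))
        ≤ ∑ l, L τ i l * V τ t0 l j := by
      rw [← hsplit]; linarith
    have hkey := mul_le_mul_of_nonneg_left hsum (Real.exp_pos (M₁ * (τ - t0))).le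
    have hee : Real.exp (M₁ * (τ - t0)) * Real.exp (-(M₁ * (τ - t0))) = 1 := by
      rw [← Real.exp_add]; simp
    nlinarith [Real.exp_pos (M₁ * (τ - t0))]
  simp only [sub_self, mul_zero, Real.exp_zero, one_mul] at key
  rw [hV0 t0 ht0, Matrix.one_apply_ne hij] at key
  rw [Real.exp_neg, inv_mul_eq_div, div_le_iff₀ (Real.exp_pos _)]
  nlinarith [Real.exp_pos (M₁ * (t - t0))]

include hM₁ hoff hdiag hbdd hV0 hVd in
lemma cocycle_lb {t0 s t : ℝ} (ht0 : 0 ≤ t0) (hs : t0 ≤ s) (hst : s ≤ t)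
    (a l k : Fin m) :
    V t s a l * V s t0 l k ≤ V t t0 a k := by
  rw [cocycleV (L := L) hM₁ hbdd hV0 hVd ht0 hs hst a k]
  apply Finset.single_le_sum (f := fun l => V t s a l * V s t0 l k) _ (Finset.mem_univ l)
  intro x _
  exact mul_nonneg
    (Vnonneg (L := L) hM₁ hoff hdiag hV0 hVd (le_trans ht0 hs) hst a x)
    (Vnonneg (L := L) hM₁ hoff hdiag hV0 hVd ht0 hs x k)

end Bounds

section Decay

variable {m : ℕ} {L : ℝ → Matrix (Fin m) (Fin m) ℝ} {M₁ : ℝ}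
  {V : ℝ → ℝ → Matrix (Fin m) (Fin m) ℝ} {δ T : ℝ}

variable (hM₁ : 0 < M₁)
  (hmeas : ∀ i j, Measurable fun t => L t i j)
  (hoff : ∀ t, 0 ≤ t → ∀ i j, i ≠ j → 0 ≤ L t i j)
  (hdiag : ∀ t, 0 ≤ t → ∀ i, L t i i = -∑ j ∈ ({i}ᶜ : Finset (Fin m)), L t i j)
  (hbdd : ∀ t, 0 ≤ t → ∀ i j, |L t i j| ≤ M₁)
  (hV0 : ∀ t0, 0 ≤ t0 → V t0 t0 = 1)
  (hVd : ∀ t0, 0 ≤ t0 → ∀ t ∈ Set.Ici t0, ∀ i j,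
      HasDerivAt (fun τ => V τ t0 i j) (∑ k, L t i k * V t t0 k j) t)

include hM₁ hmeas hoff hdiag hbdd hV0 hVd in
lemma step_lb (hδ : 0 < δ) (hT : 0 < T) {a : ℝ} (ha : 0 ≤ a) (k l : Fin m)
    (h : (δ < ∫ τ in a..(a + T), L τ l k) ∨ l = k) :
    min δ 1 * Real.exp (-(M₁ * T)) ≤ V (a + T) a l k := by
  have hb : a ≤ a + T := by linarith
  have hTT : a + T - a = T := by ring
  by_cases hlk : l = k
  · subst hlk
    have h1 := Vdiag_lower (L := L) hM₁ hmeas hoff hdiag hbdd hV0 hVd ha hb l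
    rw [hTT] at h1
    calc min δ 1 * Real.exp (-(M₁ * T)) ≤ 1 * Real.exp (-(M₁ * T)) :=
          mul_le_mul_of_nonneg_right (min_le_right δ 1) (Real.exp_pos _).le
      _ = Real.exp (-(M₁ * T)) := one_mul _
      _ ≤ V (a + T) a l l := h1
  · rcases h with h | h
    · have h1 := Vedge_lower (L := L) hM₁ hmeas hoff hdiag hbdd hV0 hVd ha hb hlk
      rw [hTT] at h1
      calc min δ 1 * Real.exp (-(M₁ * T))
          ≤ (∫ τ in a..(a + T), L τ l k) * Real.exp (-(M₁ * T)) := by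
            apply mul_le_mul_of_nonneg_right _ (Real.exp_pos _).le
            exact le_trans (min_le_left δ 1) h.le
        _ = Real.exp (-(M₁ * T)) * ∫ τ in a..(a + T), L τ l k := mul_comm _ _
        _ ≤ V (a + T) a l k := h1
    · exact absurd h hlk

include hM₁ hmeas hoff hdiag hbdd hV0 hVd in
lemma reach_lb (hδ : 0 < δ) (hT : 0 < T) {t0 : ℝ} (ht0 : 0 ≤ t0) (n : ℕ) (a : Fin m) :
    ∀ r, r ≤ n → ∀ k,
      ReachN (fun s p q => δ < ∫ τ in (t0 + (s:ℝ)*T)..(t0 + (s:ℝ)*T + T), L τ q p) n a r k →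
      (min δ 1 * Real.exp (-(M₁ * T)))^r
        ≤ V (t0 + (n:ℝ)*T) (t0 + ((n - r : ℕ):ℝ)*T) a k := by
  set c := min δ 1 * Real.exp (-(M₁ * T)) with hc
  have hc0 : 0 ≤ c := mul_nonneg (le_min hδ.le zero_le_one) (Real.exp_pos _).le
  intro r
  induction r with
  | zero =>
    intro _ k hk
    have hk' : k = a := hk
    subst hk'
    have htn : (0:ℝ) ≤ t0 + (n:ℝ)*T := by positivity
    simp only [Nat.sub_zero, pow_zero]
    rw [hV0 _ htn, Matrix.one_apply_eq]
  | succ r ih =>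
    intro hr k hk
    have hrn : r ≤ n := le_trans (Nat.le_succ r) hr
    have hrn' : r < n := hr
    -- times
    have hcast1 : ((n - r : ℕ):ℝ) = (n:ℝ) - r := by
      rw [Nat.cast_sub hrn]
    have hcast2 : ((n - (r+1) : ℕ):ℝ) = (n:ℝ) - r - 1 := by
      rw [Nat.cast_sub hr]; push_cast; ring
    set t2 : ℝ := t0 + ((n - (r+1) : ℕ):ℝ)*T with ht2
    set t1 : ℝ := t0 + ((n - r : ℕ):ℝ)*T with ht1
    set tn : ℝ := t0 + (n:ℝ)*T with htn
    have ht2nn : 0 ≤ t2 := by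
      rw [ht2]; positivity
    have ht12 : t2 ≤ t1 := by
      rw [ht1, ht2, hcast1, hcast2]
      nlinarith [hT.le]
    have ht1n : t1 ≤ tn := by
      rw [ht1, htn, hcast1]
      have : (n:ℝ) - r ≤ (n:ℝ) := by
        have : (0:ℝ) ≤ r := Nat.cast_nonneg r
        linarith
      nlinarith [hT.le]
    have ht1eq : t1 = t2 + T := by
      rw [ht1, ht2, hcast1, hcast2]; ring
    rcases hk with hk | ⟨l, hl, he⟩
    · -- stay
      have h1 := ih hrn k hk
      have h2 : c ≤ V t1 t2 k k := by
        rw [ht1eq]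
        exact step_lb (L := L) hM₁ hmeas hoff hdiag hbdd hV0 hVd hδ hT ht2nn k k (Or.inr rfl)
      have h3 := cocycle_lb (L := L) hM₁ hoff hdiag hbdd hV0 hVd ht2nn ht12 ht1n a k k
      calc c^(r+1) = c^r * c := pow_succ c r
        _ ≤ V tn t1 a k * V t1 t2 k k :=
            mul_le_mul h1 h2 hc0 (Vnonneg (L := L) hM₁ hoff hdiag hV0 hVd
              (le_trans ht2nn ht12) ht1n a k)
        _ ≤ V tn t2 a k := h3
    · -- edge from k to l at step n - r - 1
      have h1 := ih hrn l hl
      have he' : δ < ∫ τ in (t0 + ((n - (r+1):ℕ):ℝ)*T)..(t0 + ((n - (r+1):ℕ):ℝ)*T + T),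
          L τ l k := by
        have hidx : ((n - r - 1 : ℕ):ℝ) = ((n - (r+1) : ℕ):ℝ) := by
          congr 1
        rw [← hidx]
        exact he
      have h2 : c ≤ V t1 t2 l k := by
        rw [ht1eq, ht2]
        exact step_lb (L := L) hM₁ hmeas hoff hdiag hbdd hV0 hVd hδ hT ht2nn k l (Or.inl he')
      have h3 := cocycle_lb (L := L) hM₁ hoff hdiag hbdd hV0 hVd ht2nn ht12 ht1n a l k
      calc c^(r+1) = c^r * c := pow_succ c r
        _ ≤ V tn t1 a l * V t1 t2 l k :=
            mul_le_mul h1 h2 hc0 (Vnonneg (L := L) hM₁ hoff hdiag hV0 hVd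
              (le_trans ht2nn ht12) ht1n a l)
        _ ≤ V tn t2 a k := h3

include hM₁ hmeas hoff hdiag hbdd hV0 hVd in
lemma scrambleV (hm : 0 < m) (hδ : 0 < δ) (hT : 0 < T)
    (htree : ∀ t0, 0 ≤ t0 → ∃ r : Fin m, ∀ i : Fin m,
      Relation.ReflTransGen (fun p q => δ < ∫ τ in t0..(t0 + T), L τ q p) r i)
    {t0 : ℝ} (ht0 : 0 ≤ t0) (a b : Fin m) :
    ∃ k, (min δ 1 * Real.exp (-(M₁ * T)))^(m-1)
        ≤ V (t0 + ((m-1:ℕ):ℝ)*T) t0 a k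
      ∧ (min δ 1 * Real.exp (-(M₁ * T)))^(m-1)
        ≤ V (t0 + ((m-1:ℕ):ℝ)*T) t0 b k := by
  set n := m - 1 with hn
  have hmn : m ≤ n + 1 := by omega
  set e : ℕ → Fin m → Fin m → Prop :=
    fun s p q => δ < ∫ τ in (t0 + (s:ℝ)*T)..(t0 + (s:ℝ)*T + T), L τ q p with hee
  have hroots : ∀ s, ∃ r, ∀ i, Relation.ReflTransGen (e s) r i := by
    intro s
    have hs0 : (0:ℝ) ≤ t0 + (s:ℝ)*T := by positivity
    exact htree (t0 + (s:ℝ)*T) hs0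
  obtain ⟨k, hka, hkb⟩ := scramble_core n hm hmn e hroots a b
  have h1 := reach_lb (L := L) hM₁ hmeas hoff hdiag hbdd hV0 hVd hδ hT ht0 n a n
    (le_refl n) k hka
  have h2 := reach_lb (L := L) hM₁ hmeas hoff hdiag hbdd hV0 hVd hδ hT ht0 n b n
    (le_refl n) k hkb
  rw [Nat.sub_self] at h1 h2
  simp only [Nat.cast_zero, zero_mul, add_zero] at h1 h2
  exact ⟨k, h1, h2⟩

end Decay

section Decay2

variable {m : ℕ} {L : ℝ → Matrix (Fin m) (Fin m) ℝ} {M₁ : ℝ}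
  {V : ℝ → ℝ → Matrix (Fin m) (Fin m) ℝ} {δ T : ℝ}

variable (hM₁ : 0 < M₁)
  (hmeas : ∀ i j, Measurable fun t => L t i j)
  (hoff : ∀ t, 0 ≤ t → ∀ i j, i ≠ j → 0 ≤ L t i j)
  (hdiag : ∀ t, 0 ≤ t → ∀ i, L t i i = -∑ j ∈ ({i}ᶜ : Finset (Fin m)), L t i j)
  (hbdd : ∀ t, 0 ≤ t → ∀ i j, |L t i j| ≤ M₁)
  (hV0 : ∀ t0, 0 ≤ t0 → V t0 t0 = 1)
  (hVd : ∀ t0, 0 ≤ t0 → ∀ t ∈ Set.Ici t0, ∀ i j,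
      HasDerivAt (fun τ => V τ t0 i j) (∑ k, L t i k * V t t0 k j) t)

omit hM₁ hmeas hoff hdiag hbdd hVd in
include hV0 in
lemma diam_id {t0 : ℝ} (ht0 : 0 ≤ t0) (a b : Fin m) :
    ∑ l, |V t0 t0 a l - V t0 t0 b l| ≤ 2 := by
  rw [hV0 t0 ht0]
  have habs : ∀ (x : Fin m) l, |(1 : Matrix (Fin m) (Fin m) ℝ) x l| ≤
      (if x = l then (1:ℝ) else 0) := by
    intro x l
    rw [Matrix.one_apply]
    split <;> simp
  calc ∑ l, |(1 : Matrix (Fin m) (Fin m) ℝ) a l - (1 : Matrix (Fin m) (Fin m) ℝ) b l|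
      ≤ ∑ l, (|(1 : Matrix (Fin m) (Fin m) ℝ) a l| + |(1 : Matrix (Fin m) (Fin m) ℝ) b l|) := by
        apply Finset.sum_le_sum; intro l _; exact abs_sub _ _
    _ ≤ ∑ l, ((if a = l then (1:ℝ) else 0) + (if b = l then (1:ℝ) else 0)) := by
        apply Finset.sum_le_sum; intro l _; exact add_le_add (habs a l) (habs b l)
    _ = 2 := by
        rw [Finset.sum_add_distrib, Finset.sum_ite_eq, Finset.sum_ite_eq]
        simp
        norm_num

include hM₁ hmeas hoff hdiag hbdd hV0 hVd in
lemma decayN (hm2 : 2 ≤ m) (hδ : 0 < δ) (hT : 0 < T)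
    (htree : ∀ t0, 0 ≤ t0 → ∃ r : Fin m, ∀ i : Fin m,
      Relation.ReflTransGen (fun p q => δ < ∫ τ in t0..(t0 + T), L τ q p) r i)
    {t0 : ℝ} (ht0 : 0 ≤ t0) (N : ℕ) (a b : Fin m) :
    ∑ l, |V (t0 + (N:ℝ)*(((m-1:ℕ):ℝ)*T)) t0 a l - V (t0 + (N:ℝ)*(((m-1:ℕ):ℝ)*T)) t0 b l|
      ≤ 2 * (1 - (min δ 1 * Real.exp (-(M₁ * T)))^(m-1))^N := by
  classical
  have hc0 : 0 < min δ 1 * Real.exp (-(M₁ * T)) :=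
    mul_pos (lt_min hδ zero_lt_one) (Real.exp_pos _)
  have hc1 : min δ 1 * Real.exp (-(M₁ * T)) ≤ 1 := by
    calc min δ 1 * Real.exp (-(M₁ * T)) ≤ 1 * Real.exp (-(M₁ * T)) :=
          mul_le_mul_of_nonneg_right (min_le_right δ 1) (Real.exp_pos _).le
      _ = Real.exp (-(M₁ * T)) := one_mul _
      _ ≤ 1 := Real.exp_le_one_iff.2 (by nlinarith)
  have hη0 : 0 < (min δ 1 * Real.exp (-(M₁ * T)))^(m-1) := pow_pos hc0 _
  have hη1 : (min δ 1 * Real.exp (-(M₁ * T)))^(m-1) ≤ 1 := pow_le_one₀ hc0.le hc1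
  have hS0 : 0 < ((m-1:ℕ):ℝ)*T := by
    apply mul_pos _ hT
    have h1 : (1:ℕ) ≤ m - 1 := by omega
    calc (0:ℝ) < 1 := zero_lt_one
      _ ≤ ((m-1:ℕ):ℝ) := by exact_mod_cast h1
  induction N generalizing a b with
  | zero =>
    simp only [Nat.cast_zero, zero_mul, add_zero, pow_zero, mul_one]
    exact diam_id (V := V) hV0 ht0 a b
  | succ N ih =>
    set S : ℝ := ((m-1:ℕ):ℝ)*T with hSdef
    set t1 : ℝ := t0 + (N:ℝ)*S with ht1def
    set t2 : ℝ := t0 + ((N+1:ℕ):ℝ)*S with ht2def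
    have hNS : 0 ≤ (N:ℝ)*S := by positivity
    have ht01 : t0 ≤ t1 := by rw [ht1def]; linarith
    have ht1nn : 0 ≤ t1 := le_trans ht0 ht01
    have ht12 : t1 ≤ t2 := by
      rw [ht1def, ht2def]; push_cast
      nlinarith [hS0.le]
    have ht2eq : t2 = t1 + ((m-1:ℕ):ℝ)*T := by
      rw [ht1def, ht2def, hSdef]; push_cast; ring
    set P := V t2 t1 with hPdef
    set Q := V t1 t0 with hQdef
    have hentry : ∀ x l, V t2 t0 x l = (P * Q) x l := by
      intro x l
      rw [Matrix.mul_apply, hPdef, hQdef]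
      exact cocycleV (L := L) hM₁ hbdd hV0 hVd ht0 ht01 ht12 x l
    have hP0 : ∀ i j, 0 ≤ P i j := fun i j =>
      Vnonneg (L := L) hM₁ hoff hdiag hV0 hVd ht1nn ht12 i j
    have hP1 : ∀ i, ∑ k, P i k = 1 := fun i =>
      rowsumV (L := L) hM₁ hdiag hbdd hV0 hVd ht1nn ht12 i
    have hQbd : ∀ k k', ∑ l, |Q k l - Q k' l|
        ≤ 2 * (1 - (min δ 1 * Real.exp (-(M₁ * T)))^(m-1))^N := fun k k' => ih k k'
    have hscr : ∃ k, (min δ 1 * Real.exp (-(M₁ * T)))^(m-1) ≤ P a k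
        ∧ (min δ 1 * Real.exp (-(M₁ * T)))^(m-1) ≤ P b k := by
      obtain ⟨k, h1, h2⟩ := scrambleV (L := L) hM₁ hmeas hoff hdiag hbdd hV0 hVd
        (by omega : 0 < m) hδ hT htree ht1nn a b
      refine ⟨k, ?_, ?_⟩
      · rw [hPdef, ht2eq]; exact h1
      · rw [hPdef, ht2eq]; exact h2
    have hD0 : (0:ℝ) ≤ 2 * (1 - (min δ 1 * Real.exp (-(M₁ * T)))^(m-1))^N := by
      apply mul_nonneg (by norm_num)
      apply pow_nonneg; linarith
    calc ∑ l, |V t2 t0 a l - V t2 t0 b l|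
        = ∑ l, |(P * Q) a l - (P * Q) b l| := by
          apply Finset.sum_congr rfl; intro l _; rw [hentry a l, hentry b l]
      _ ≤ (1 - (min δ 1 * Real.exp (-(M₁ * T)))^(m-1))
            * (2 * (1 - (min δ 1 * Real.exp (-(M₁ * T)))^(m-1))^N) :=
          hajnal_pair P Q hP0 hP1 _ _ hη1 hD0 hQbd a b hscr
      _ = 2 * (1 - (min δ 1 * Real.exp (-(M₁ * T)))^(m-1))^(N+1) := by ring

include hM₁ hmeas hoff hdiag hbdd hV0 hVd in
lemma decay_all (hm2 : 2 ≤ m) (hδ : 0 < δ) (hT : 0 < T)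
    (htree : ∀ t0, 0 ≤ t0 → ∃ r : Fin m, ∀ i : Fin m,
      Relation.ReflTransGen (fun p q => δ < ∫ τ in t0..(t0 + T), L τ q p) r i)
    {t0 : ℝ} (ht0 : 0 ≤ t0) {t : ℝ} (htnn : 0 ≤ t) (a b : Fin m) :
    ∑ l, |V (t0 + t) t0 a l - V (t0 + t) t0 b l|
      ≤ 2 * (1 - (min δ 1 * Real.exp (-(M₁ * T)))^(m-1))^(⌊t / (((m-1:ℕ):ℝ)*T)⌋₊) := by
  classical
  have hc0 : 0 < min δ 1 * Real.exp (-(M₁ * T)) :=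
    mul_pos (lt_min hδ zero_lt_one) (Real.exp_pos _)
  have hc1 : min δ 1 * Real.exp (-(M₁ * T)) ≤ 1 := by
    calc min δ 1 * Real.exp (-(M₁ * T)) ≤ 1 * Real.exp (-(M₁ * T)) :=
          mul_le_mul_of_nonneg_right (min_le_right δ 1) (Real.exp_pos _).le
      _ = Real.exp (-(M₁ * T)) := one_mul _
      _ ≤ 1 := Real.exp_le_one_iff.2 (by nlinarith)
  have hη1 : (min δ 1 * Real.exp (-(M₁ * T)))^(m-1) ≤ 1 := pow_le_one₀ hc0.le hc1
  have hS0 : 0 < ((m-1:ℕ):ℝ)*T := by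
    apply mul_pos _ hT
    have h1 : (1:ℕ) ≤ m - 1 := by omega
    calc (0:ℝ) < 1 := zero_lt_one
      _ ≤ ((m-1:ℕ):ℝ) := by exact_mod_cast h1
  set S : ℝ := ((m-1:ℕ):ℝ)*T with hSdef
  set N : ℕ := ⌊t / S⌋₊ with hNdef
  have hNt : (N:ℝ)*S ≤ t := by
    have h1 : (N:ℝ) ≤ t / S := Nat.floor_le (div_nonneg htnn hS0.le)
    calc (N:ℝ)*S ≤ (t/S)*S := mul_le_mul_of_nonneg_right h1 hS0.le
      _ = t := div_mul_cancel₀ t (ne_of_gt hS0)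
  set t1 : ℝ := t0 + (N:ℝ)*S with ht1def
  have hNS : 0 ≤ (N:ℝ)*S := by positivity
  have ht01 : t0 ≤ t1 := by rw [ht1def]; linarith
  have ht1nn : 0 ≤ t1 := le_trans ht0 ht01
  have ht1t : t1 ≤ t0 + t := by rw [ht1def]; linarith
  set P := V (t0 + t) t1 with hPdef
  set Q := V t1 t0 with hQdef
  have hentry : ∀ x l, V (t0 + t) t0 x l = (P * Q) x l := by
    intro x l
    rw [Matrix.mul_apply, hPdef, hQdef]
    exact cocycleV (L := L) hM₁ hbdd hV0 hVd ht0 ht01 ht1t x l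
  have hP0 : ∀ i j, 0 ≤ P i j := fun i j =>
    Vnonneg (L := L) hM₁ hoff hdiag hV0 hVd ht1nn ht1t i j
  have hP1 : ∀ i, ∑ k, P i k = 1 := fun i =>
    rowsumV (L := L) hM₁ hdiag hbdd hV0 hVd ht1nn ht1t i
  have hQbd : ∀ k k', ∑ l, |Q k l - Q k' l|
      ≤ 2 * (1 - (min δ 1 * Real.exp (-(M₁ * T)))^(m-1))^N := fun k k' =>
    decayN (L := L) hM₁ hmeas hoff hdiag hbdd hV0 hVd hm2 hδ hT htree ht0 N k k'
  have hD0 : (0:ℝ) ≤ 2 * (1 - (min δ 1 * Real.exp (-(M₁ * T)))^(m-1))^N := by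
    apply mul_nonneg (by norm_num)
    apply pow_nonneg; linarith
  calc ∑ l, |V (t0 + t) t0 a l - V (t0 + t) t0 b l|
      = ∑ l, |(P * Q) a l - (P * Q) b l| := by
        apply Finset.sum_congr rfl; intro l _; rw [hentry a l, hentry b l]
    _ ≤ (1 - (0:ℝ)) * (2 * (1 - (min δ 1 * Real.exp (-(M₁ * T)))^(m-1))^N) :=
        hajnal_pair P Q hP0 hP1 0 _ zero_le_one hD0 hQbd a b
          ⟨a, hP0 a a, hP0 b a⟩
    _ = 2 * (1 - (min δ 1 * Real.exp (-(M₁ * T)))^(m-1))^N := by ring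

end Decay2

section Mass

variable {m : ℕ} {L : ℝ → Matrix (Fin m) (Fin m) ℝ} {M₁ : ℝ}
  {V : ℝ → ℝ → Matrix (Fin m) (Fin m) ℝ}

variable (hM₁ : 0 < M₁)
  (hmeas : ∀ i j, Measurable fun t => L t i j)
  (hoff : ∀ t, 0 ≤ t → ∀ i j, i ≠ j → 0 ≤ L t i j)
  (hdiag : ∀ t, 0 ≤ t → ∀ i, L t i i = -∑ j ∈ ({i}ᶜ : Finset (Fin m)), L t i j)
  (hbdd : ∀ t, 0 ≤ t → ∀ i j, |L t i j| ≤ M₁)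
  (hV0 : ∀ t0, 0 ≤ t0 → V t0 t0 = 1)
  (hVd : ∀ t0, 0 ≤ t0 → ∀ t ∈ Set.Ici t0, ∀ i j,
      HasDerivAt (fun τ => V τ t0 i j) (∑ k, L t i k * V t t0 k j) t)

include hM₁ hmeas hoff hdiag hbdd hV0 hVd in
lemma mass_estimate {δ T t0 : ℝ} (hδ : 0 < δ) (hT : 0 < T) (ht0 : 0 ≤ t0)
    (A : Finset (Fin m))
    (hclosed : ∀ x ∈ A, ∀ j : Fin m, (δ < ∫ τ in t0..(t0 + T), L τ x j) → j ∈ A) :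
    ∀ a ∈ A, ∑ k ∈ Aᶜ, V (t0 + T) t0 a k
      ≤ Real.exp ((m:ℝ) * M₁ * T) * ((m:ℝ)^2 * δ) := by
  classical
  set K : ℝ := (m:ℝ) * M₁ with hK
  have hK0 : 0 ≤ K := mul_nonneg (Nat.cast_nonneg m) hM₁.le
  have ht1 : t0 ≤ t0 + T := by linarith
  set F : ℝ → ℝ := fun τ => ∑ a ∈ A, ∑ k ∈ Aᶜ, V τ t0 a k with hF
  set ε : ℝ → ℝ := fun τ => ∑ a ∈ A, ∑ l ∈ Aᶜ, L τ a l with hε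
  set F' : ℝ → ℝ := fun τ => ∑ a ∈ A, ∑ k ∈ Aᶜ, ∑ l, L τ a l * V τ t0 l k with hF'
  have hFd : ∀ τ ∈ Set.Icc t0 (t0 + T), HasDerivAt F (F' τ) τ := by
    intro τ hτ
    exact HasDerivAt.fun_sum (fun a _ => HasDerivAt.fun_sum (fun k _ => hVd t0 ht0 τ hτ.1 a k))
  -- basic bounds on V on [t0, t0+T]
  have hVb : ∀ τ, t0 ≤ τ → ∀ i j, 0 ≤ V τ t0 i j ∧ V τ t0 i j ≤ 1 := by
    intro τ hτ i j
    exact ⟨Vnonneg (L := L) hM₁ hoff hdiag hV0 hVd ht0 hτ i j,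
      Vle1 (L := L) hM₁ hoff hdiag hbdd hV0 hVd ht0 hτ i j⟩
  have hφ : ∀ τ, t0 ≤ τ → ∀ l : Fin m, 0 ≤ ∑ k ∈ Aᶜ, V τ t0 l k
      ∧ ∑ k ∈ Aᶜ, V τ t0 l k ≤ 1 := by
    intro τ hτ l
    constructor
    · exact Finset.sum_nonneg fun k _ => (hVb τ hτ l k).1
    · calc ∑ k ∈ Aᶜ, V τ t0 l k ≤ ∑ k, V τ t0 l k :=
          Finset.sum_le_sum_of_subset_of_nonneg (Finset.subset_univ _)
            (fun k _ _ => (hVb τ hτ l k).1)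
      _ = 1 := rowsumV (L := L) hM₁ hdiag hbdd hV0 hVd ht0 hτ l
  have hF0 : ∀ τ, t0 ≤ τ → 0 ≤ F τ :=
    fun τ hτ => Finset.sum_nonneg fun a _ => (hφ τ hτ a).1
  -- key differential inequality
  have hkey : ∀ τ ∈ Set.Icc t0 (t0 + T), F' τ ≤ K * F τ + ε τ := by
    intro τ hτ
    have hτ0 : (0:ℝ) ≤ τ := le_trans ht0 hτ.1
    have hstep : ∀ a ∈ A, ∑ k ∈ Aᶜ, ∑ l, L τ a l * V τ t0 l k
        ≤ M₁ * F τ + ∑ l ∈ Aᶜ, L τ a l := by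
      intro a ha
      have hswap : ∑ k ∈ Aᶜ, ∑ l, L τ a l * V τ t0 l k
          = ∑ l, L τ a l * ∑ k ∈ Aᶜ, V τ t0 l k := by
        rw [Finset.sum_comm]
        apply Finset.sum_congr rfl; intro l _
        rw [Finset.mul_sum]
      rw [hswap]
      have hsplit := Finset.sum_add_sum_compl A
        (fun l => L τ a l * ∑ k ∈ Aᶜ, V τ t0 l k)
      rw [← hsplit]
      have h1 : ∑ l ∈ A, L τ a l * (∑ k ∈ Aᶜ, V τ t0 l k) ≤ M₁ * F τ := by
        calc ∑ l ∈ A, L τ a l * (∑ k ∈ Aᶜ, V τ t0 l k)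
            ≤ ∑ l ∈ A, M₁ * (∑ k ∈ Aᶜ, V τ t0 l k) := by
              apply Finset.sum_le_sum; intro l _
              exact mul_le_mul_of_nonneg_right
                (le_of_abs_le (hbdd τ hτ0 a l)) (hφ τ hτ.1 l).1
          _ = M₁ * F τ := by rw [← Finset.mul_sum]
      have h2 : ∑ l ∈ Aᶜ, L τ a l * (∑ k ∈ Aᶜ, V τ t0 l k) ≤ ∑ l ∈ Aᶜ, L τ a l := by
        apply Finset.sum_le_sum; intro l hl
        have hla : l ≠ a := by
          intro h; rw [Finset.mem_compl] at hl; exact hl (h ▸ ha)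
        have hL0 : 0 ≤ L τ a l := hoff τ hτ0 a l (fun h => hla h.symm)
        calc L τ a l * (∑ k ∈ Aᶜ, V τ t0 l k) ≤ L τ a l * 1 :=
              mul_le_mul_of_nonneg_left (hφ τ hτ.1 l).2 hL0
          _ = L τ a l := mul_one _
      linarith
    calc F' τ ≤ ∑ a ∈ A, (M₁ * F τ + ∑ l ∈ Aᶜ, L τ a l) :=
          Finset.sum_le_sum hstep
      _ = (A.card : ℝ) * (M₁ * F τ) + ε τ := by
          rw [Finset.sum_add_distrib, Finset.sum_const, nsmul_eq_mul, hε]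
      _ ≤ K * F τ + ε τ := by
          have hcard : (A.card : ℝ) ≤ (m:ℝ) := by
            exact_mod_cast (Finset.card_le_univ A).trans_eq (by simp)
          have hMF : 0 ≤ M₁ * F τ := mul_nonneg hM₁.le (hF0 τ hτ.1)
          have := mul_le_mul_of_nonneg_right hcard hMF
          rw [hK]
          nlinarith
  -- derivative of g := exp(-K (τ - t0)) F
  set g : ℝ → ℝ := fun τ => Real.exp ((-K) * (τ - t0)) * F τ with hg
  set g' : ℝ → ℝ := fun τ =>
    (Real.exp ((-K) * (τ - t0)) * (-K)) * F τ + Real.exp ((-K) * (τ - t0)) * F' τ with hg'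
  have hgd : ∀ τ ∈ Set.Icc t0 (t0 + T), HasDerivAt g (g' τ) τ := by
    intro τ hτ
    have e0 : HasDerivAt (fun σ : ℝ => (-K) * (σ - t0)) (-K) τ := by
      simpa using ((hasDerivAt_id τ).sub_const t0).const_mul (-K)
    exact (e0.exp).mul (hFd τ hτ)
  have hg'le : ∀ τ ∈ Set.Icc t0 (t0 + T), g' τ ≤ ε τ := by
    intro τ hτ
    have hτ0 : (0:ℝ) ≤ τ := le_trans ht0 hτ.1
    have hexple : Real.exp ((-K) * (τ - t0)) ≤ 1 := by
      apply Real.exp_le_one_iff.2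
      have : 0 ≤ τ - t0 := by linarith [hτ.1]
      nlinarith
    have hexppos : 0 < Real.exp ((-K) * (τ - t0)) := Real.exp_pos _
    have hεnn : 0 ≤ ε τ := by
      rw [hε]
      apply Finset.sum_nonneg; intro a ha
      apply Finset.sum_nonneg; intro l hl
      have hla : l ≠ a := by
        intro h; rw [Finset.mem_compl] at hl; exact hl (h ▸ ha)
      exact hoff τ hτ0 a l (fun h => hla h.symm)
    have h1 : g' τ = Real.exp ((-K) * (τ - t0)) * (F' τ - K * F τ) := by
      rw [hg']; ring
    rw [h1]
    calc Real.exp ((-K) * (τ - t0)) * (F' τ - K * F τ)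
        ≤ Real.exp ((-K) * (τ - t0)) * ε τ := by
          apply mul_le_mul_of_nonneg_left _ hexppos.le
          have := hkey τ hτ
          linarith
      _ ≤ 1 * ε τ := mul_le_mul_of_nonneg_right hexple hεnn
      _ = ε τ := one_mul _
  -- integrability
  have hexpc : Continuous (fun τ : ℝ => Real.exp ((-K) * (τ - t0))) :=
    Real.continuous_exp.comp (continuous_const.mul (continuous_id.sub continuous_const))
  have haesmF : MeasureTheory.AEStronglyMeasurable F
      (MeasureTheory.volume.restrict (Set.Ioc t0 (t0 + T))) := by
    apply Finset.aestronglyMeasurable_fun_sum; intro a _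
    apply Finset.aestronglyMeasurable_fun_sum; intro k _
    exact aesmV (L := L) hVd ht0 (le_refl t0) a k
  have haesmF' : MeasureTheory.AEStronglyMeasurable F'
      (MeasureTheory.volume.restrict (Set.Ioc t0 (t0 + T))) := by
    apply Finset.aestronglyMeasurable_fun_sum; intro a _
    apply Finset.aestronglyMeasurable_fun_sum; intro k _
    apply Finset.aestronglyMeasurable_fun_sum; intro l _
    exact ((hmeas a l).aestronglyMeasurable.restrict).mul
      (aesmV (L := L) hVd ht0 (le_refl t0) l k)
  have hFbd : ∀ τ ∈ Set.Ioc t0 (t0 + T), |F τ| ≤ (m:ℝ)^2 := by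
    intro τ hτ
    have hτ1 : t0 ≤ τ := hτ.1.le
    rw [abs_of_nonneg (hF0 τ hτ1)]
    calc F τ ≤ ∑ a ∈ A, (1:ℝ) := by
          apply Finset.sum_le_sum; intro a _; exact (hφ τ hτ1 a).2
      _ = (A.card : ℝ) := by rw [Finset.sum_const, nsmul_eq_mul, mul_one]
      _ ≤ (m:ℝ) := by exact_mod_cast (Finset.card_le_univ A).trans_eq (by simp)
      _ ≤ (m:ℝ)^2 := by exact_mod_cast Nat.le_self_pow (by norm_num) m
  have hF'bd : ∀ τ ∈ Set.Ioc t0 (t0 + T), |F' τ| ≤ (m:ℝ)^3 * M₁ := by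
    intro τ hτ
    have hτ1 : t0 ≤ τ := hτ.1.le
    have hτ0 : (0:ℝ) ≤ τ := le_trans ht0 hτ1
    have hterm : ∀ a k, |∑ l, L τ a l * V τ t0 l k| ≤ (m:ℝ) * M₁ := by
      intro a k
      calc |∑ l, L τ a l * V τ t0 l k| ≤ ∑ l, |L τ a l * V τ t0 l k| :=
            Finset.abs_sum_le_sum_abs _ _
        _ ≤ ∑ _l : Fin m, M₁ := by
            apply Finset.sum_le_sum; intro l _
            rw [abs_mul]
            calc |L τ a l| * |V τ t0 l k| ≤ M₁ * 1 := by
                  apply mul_le_mul (hbdd τ hτ0 a l) _ (abs_nonneg _) hM₁.le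
                  rw [abs_of_nonneg (hVb τ hτ1 l k).1]
                  exact (hVb τ hτ1 l k).2
              _ = M₁ := mul_one _
        _ = (m:ℝ) * M₁ := by
            rw [Finset.sum_const, Finset.card_univ, Fintype.card_fin, nsmul_eq_mul]
    calc |F' τ| ≤ ∑ a ∈ A, |∑ k ∈ Aᶜ, ∑ l, L τ a l * V τ t0 l k| :=
          Finset.abs_sum_le_sum_abs _ _
      _ ≤ ∑ a ∈ A, ∑ k ∈ Aᶜ, |∑ l, L τ a l * V τ t0 l k| :=
          Finset.sum_le_sum (fun a _ => Finset.abs_sum_le_sum_abs _ _)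
      _ ≤ ∑ _a ∈ A, ∑ _k ∈ Aᶜ, (m:ℝ) * M₁ :=
          Finset.sum_le_sum (fun a _ => Finset.sum_le_sum (fun k _ => hterm a k))
      _ = (A.card : ℝ) * ((Aᶜ.card : ℝ) * ((m:ℝ) * M₁)) := by
          rw [Finset.sum_const, Finset.sum_const, nsmul_eq_mul, nsmul_eq_mul]
      _ ≤ (m:ℝ) * ((m:ℝ) * ((m:ℝ) * M₁)) := by
          have h1 : (A.card : ℝ) ≤ (m:ℝ) := by
            exact_mod_cast (Finset.card_le_univ A).trans_eq (by simp)
          have h2 : ((Aᶜ.card : ℕ) : ℝ) ≤ (m:ℝ) := by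
            exact_mod_cast (Finset.card_le_univ Aᶜ).trans_eq (by simp)
          apply mul_le_mul h1 (mul_le_mul h2 (le_refl _) (by positivity) (Nat.cast_nonneg m))
            (by positivity) (Nat.cast_nonneg m)
      _ = (m:ℝ)^3 * M₁ := by ring
  have hintg' : IntervalIntegrable g' MeasureTheory.volume t0 (t0 + T) := by
    apply meas_bdd_integrable ht1
      (C := 1 * K * (m:ℝ)^2 + 1 * ((m:ℝ)^3 * M₁))
    · apply MeasureTheory.AEStronglyMeasurable.add
      · exact ((hexpc.mul continuous_const).aestronglyMeasurable.restrict).mul haesmF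
      · exact (hexpc.aestronglyMeasurable.restrict).mul haesmF'
    · intro τ hτ
      have hexple : Real.exp ((-K) * (τ - t0)) ≤ 1 := by
        apply Real.exp_le_one_iff.2
        have : 0 ≤ τ - t0 := by linarith [hτ.1.le]
        nlinarith
      have hexppos : 0 < Real.exp ((-K) * (τ - t0)) := Real.exp_pos _
      apply le_trans (abs_add_le _ _)
      apply add_le_add
      · rw [abs_mul, abs_mul, abs_of_nonneg hexppos.le, abs_neg, abs_of_nonneg hK0]
        apply mul_le_mul
        · apply mul_le_mul hexple (le_refl K) hK0 zero_le_one
        · exact hFbd τ hτ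
        · exact abs_nonneg _
        · positivity
      · rw [abs_mul, abs_of_nonneg hexppos.le]
        apply mul_le_mul hexple (hF'bd τ hτ) (abs_nonneg _) zero_le_one
  have hintε : IntervalIntegrable ε MeasureTheory.volume t0 (t0 + T) := by
    apply meas_bdd_integrable ht1 (C := (m:ℝ)^2 * M₁)
    · apply Finset.aestronglyMeasurable_fun_sum; intro a _
      apply Finset.aestronglyMeasurable_fun_sum; intro l _
      exact (hmeas a l).aestronglyMeasurable.restrict
    · intro τ hτ
      have hτ0 : (0:ℝ) ≤ τ := le_trans ht0 hτ.1.le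
      calc |ε τ| ≤ ∑ a ∈ A, |∑ l ∈ Aᶜ, L τ a l| := Finset.abs_sum_le_sum_abs _ _
        _ ≤ ∑ a ∈ A, ∑ l ∈ Aᶜ, |L τ a l| :=
            Finset.sum_le_sum (fun a _ => Finset.abs_sum_le_sum_abs _ _)
        _ ≤ ∑ _a ∈ A, ∑ _l ∈ Aᶜ, M₁ :=
            Finset.sum_le_sum (fun a _ => Finset.sum_le_sum (fun l _ => hbdd τ hτ0 a l))
        _ = (A.card : ℝ) * ((Aᶜ.card : ℝ) * M₁) := by
            rw [Finset.sum_const, Finset.sum_const, nsmul_eq_mul, nsmul_eq_mul]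
        _ ≤ (m:ℝ) * ((m:ℝ) * M₁) := by
            have h1 : (A.card : ℝ) ≤ (m:ℝ) := by
              exact_mod_cast (Finset.card_le_univ A).trans_eq (by simp)
            have h2 : ((Aᶜ.card : ℕ) : ℝ) ≤ (m:ℝ) := by
              exact_mod_cast (Finset.card_le_univ Aᶜ).trans_eq (by simp)
            apply mul_le_mul h1 (mul_le_mul h2 (le_refl _) hM₁.le (Nat.cast_nonneg m))
              (by positivity) (Nat.cast_nonneg m)
        _ = (m:ℝ)^2 * M₁ := by ring
  -- FTC
  have hftc := ftc_le ht1 hgd hintg' hintε hg'le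
  have hgt0 : g t0 = 0 := by
    rw [hg]
    simp only [sub_self, mul_zero, Real.exp_zero, one_mul]
    rw [hF]
    apply Finset.sum_eq_zero; intro a ha
    apply Finset.sum_eq_zero; intro k hk
    rw [hV0 t0 ht0, Matrix.one_apply_ne]
    intro h
    rw [Finset.mem_compl] at hk
    exact hk (h ▸ ha)
  -- bound the integral of ε
  have hintbound : ∫ τ in t0..(t0 + T), ε τ ≤ (m:ℝ)^2 * δ := by
    have hinner : ∀ a : Fin m, IntervalIntegrable (fun τ => ∑ l ∈ Aᶜ, L τ a l)
        MeasureTheory.volume t0 (t0 + T) := by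
      intro a
      apply meas_bdd_integrable ht1 (C := (m:ℝ) * M₁)
      · apply Finset.aestronglyMeasurable_fun_sum; intro l _
        exact (hmeas a l).aestronglyMeasurable.restrict
      · intro τ hτ
        have hτ0 : (0:ℝ) ≤ τ := le_trans ht0 hτ.1.le
        calc |∑ l ∈ Aᶜ, L τ a l| ≤ ∑ l ∈ Aᶜ, |L τ a l| := Finset.abs_sum_le_sum_abs _ _
          _ ≤ ∑ _l ∈ Aᶜ, M₁ := Finset.sum_le_sum (fun l _ => hbdd τ hτ0 a l)
          _ = (Aᶜ.card : ℝ) * M₁ := by rw [Finset.sum_const, nsmul_eq_mul]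
          _ ≤ (m:ℝ) * M₁ := by
              apply mul_le_mul_of_nonneg_right _ hM₁.le
              exact_mod_cast (Finset.card_le_univ Aᶜ).trans_eq (by simp)
    have hrep : ∫ τ in t0..(t0 + T), ε τ
        = ∑ a ∈ A, ∑ l ∈ Aᶜ, ∫ τ in t0..(t0 + T), L τ a l := by
      simp only [hε]
      rw [intervalIntegral.integral_finset_sum (fun a _ => hinner a)]
      apply Finset.sum_congr rfl; intro a _
      exact intervalIntegral.integral_finset_sum
        (fun l _ => Lintegrable (L := L) hM₁ hmeas hbdd ht0 ht1 a l)
    rw [hrep]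
    have hone : ∀ a ∈ A, ∀ l ∈ Aᶜ, ∫ τ in t0..(t0 + T), L τ a l ≤ δ := by
      intro a ha l hl
      by_contra hcon
      push_neg at hcon
      rw [Finset.mem_compl] at hl
      exact hl (hclosed a ha l hcon)
    calc ∑ a ∈ A, ∑ l ∈ Aᶜ, ∫ τ in t0..(t0 + T), L τ a l
        ≤ ∑ _a ∈ A, ∑ _l ∈ Aᶜ, δ :=
          Finset.sum_le_sum (fun a ha => Finset.sum_le_sum (fun l hl => hone a ha l hl))
      _ = (A.card : ℝ) * ((Aᶜ.card : ℝ) * δ) := by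
          rw [Finset.sum_const, Finset.sum_const, nsmul_eq_mul, nsmul_eq_mul]
      _ ≤ (m:ℝ) * ((m:ℝ) * δ) := by
          have h1 : (A.card : ℝ) ≤ (m:ℝ) := by
            exact_mod_cast (Finset.card_le_univ A).trans_eq (by simp)
          have h2 : ((Aᶜ.card : ℕ) : ℝ) ≤ (m:ℝ) := by
            exact_mod_cast (Finset.card_le_univ Aᶜ).trans_eq (by simp)
          apply mul_le_mul h1 (mul_le_mul h2 (le_refl _) hδ.le (Nat.cast_nonneg m))
            (by positivity) (Nat.cast_nonneg m)
      _ = (m:ℝ)^2 * δ := by ring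
  -- conclude F (t0+T) ≤ exp(K T) m² δ
  have hgfin : g (t0 + T) ≤ (m:ℝ)^2 * δ := by
    calc g (t0 + T) ≤ g t0 + ∫ τ in t0..(t0 + T), ε τ := hftc
      _ = ∫ τ in t0..(t0 + T), ε τ := by rw [hgt0, zero_add]
      _ ≤ (m:ℝ)^2 * δ := hintbound
  have hFfin : F (t0 + T) ≤ Real.exp (K * T) * ((m:ℝ)^2 * δ) := by
    have hgdef : g (t0 + T) = Real.exp ((-K) * (t0 + T - t0)) * F (t0 + T) := rfl
    have hTT : t0 + T - t0 = T := by ring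
    rw [hTT] at hgdef
    have hpos : 0 < Real.exp ((-K) * T) := Real.exp_pos _
    have h2 : Real.exp ((-K) * T) * F (t0 + T) ≤ (m:ℝ)^2 * δ := by
      rw [← hgdef]; exact hgfin
    have h3 : Real.exp (K * T) * Real.exp ((-K) * T) = 1 := by
      rw [← Real.exp_add]; simp
    have h4 : Real.exp (K*T) * (Real.exp ((-K)*T) * F (t0+T)) = F (t0+T) := by
      rw [← mul_assoc, h3, one_mul]
    have h5 := mul_le_mul_of_nonneg_left h2 (Real.exp_pos (K * T)).le
    rw [h4] at h5
    exact h5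
  intro a ha
  calc ∑ k ∈ Aᶜ, V (t0 + T) t0 a k
      ≤ F (t0 + T) := by
        apply Finset.single_le_sum (f := fun a => ∑ k ∈ Aᶜ, V (t0 + T) t0 a k) _ ha
        intro x _
        exact (hφ (t0 + T) ht1 x).1
    _ ≤ Real.exp (K * T) * ((m:ℝ)^2 * δ) := hFfin
    _ = Real.exp ((m:ℝ) * M₁ * T) * ((m:ℝ)^2 * δ) := by rw [hK]

end Mass

section Assemble

open Filter

variable {m : ℕ} {L : ℝ → Matrix (Fin m) (Fin m) ℝ} {M₁ : ℝ}
  {V : ℝ → ℝ → Matrix (Fin m) (Fin m) ℝ}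

variable (hM₁ : 0 < M₁)
  (hmeas : ∀ i j, Measurable fun t => L t i j)
  (hoff : ∀ t, 0 ≤ t → ∀ i j, i ≠ j → 0 ≤ L t i j)
  (hdiag : ∀ t, 0 ≤ t → ∀ i, L t i i = -∑ j ∈ ({i}ᶜ : Finset (Fin m)), L t i j)
  (hbdd : ∀ t, 0 ≤ t → ∀ i j, |L t i j| ≤ M₁)
  (hV0 : ∀ t0, 0 ≤ t0 → V t0 t0 = 1)
  (hVd : ∀ t0, 0 ≤ t0 → ∀ t ∈ Set.Ici t0, ∀ i j,
      HasDerivAt (fun τ => V τ t0 i j) (∑ k, L t i k * V t t0 k j) t)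

include hM₁ hmeas hoff hdiag hbdd hV0 hVd in
lemma necessity (hm : 0 < m)
    (hlim : limsup (fun t : ℝ => ⨆ t0 : {x : ℝ // 0 ≤ x},
        (ENNReal.ofReal (⨆ i : Fin m, ⨆ j : Fin m,
            ∑ k, |V (t + t0) t0 i k - V (t + t0) t0 j k|)) ^ (1 / t)) atTop < 1) :
    ∃ δ > (0:ℝ), ∃ T > (0:ℝ), ∀ t0, 0 ≤ t0 →
      ∃ r : Fin m, ∀ i : Fin m,
        Relation.ReflTransGen (fun a b => δ < ∫ τ in t0..(t0 + T), L τ b a) r i := by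
  classical
  by_contra hno
  push_neg at hno
  set f : ℝ → ENNReal := fun t : ℝ => ⨆ t0 : {x : ℝ // 0 ≤ x},
      (ENNReal.ofReal (⨆ i : Fin m, ⨆ j : Fin m,
          ∑ k, |V (t + t0) t0 i k - V (t + t0) t0 j k|)) ^ (1 / t) with hf
  have hfreq : ∀ n : ℕ, 1 ≤ n → (1:ENNReal) ≤ f (n:ℝ) := by
    intro n hn
    have hm0 : (0:ℝ) < m := by exact_mod_cast hm
    set δn : ℝ := Real.exp (-((m:ℝ) * M₁ * n)) / (8 * (m:ℝ)^2) with hδndef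
    have hδn : 0 < δn := by positivity
    have hn0 : (0:ℝ) < n := by exact_mod_cast hn
    obtain ⟨t0, ht0, hnoroot⟩ := hno δn hδn (n:ℝ) hn0
    obtain ⟨A, B, hAne, hBne, hdisj, hAcl, hBcl⟩ :=
      no_root_split hm (e := fun a b => δn < ∫ τ in t0..(t0 + n), L τ b a) hnoroot
    have hval : Real.exp ((m:ℝ) * M₁ * n) * ((m:ℝ)^2 * δn) = 1/8 := by
      rw [hδndef, Real.exp_neg]
      have hexpne : Real.exp ((m:ℝ) * M₁ * n) ≠ 0 := (Real.exp_pos _).ne'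
      field_simp
    have hmassA : ∀ a ∈ A, ∑ k ∈ Aᶜ, V (t0 + n) t0 a k ≤ 1/8 := by
      intro a ha
      have := mass_estimate (L := L) hM₁ hmeas hoff hdiag hbdd hV0 hVd
        hδn hn0 ht0 A hAcl a ha
      rw [hval] at this
      exact this
    have hmassB : ∀ b ∈ B, ∑ k ∈ Bᶜ, V (t0 + n) t0 b k ≤ 1/8 := by
      intro b hb
      have := mass_estimate (L := L) hM₁ hmeas hoff hdiag hbdd hV0 hVd
        hδn hn0 ht0 B hBcl b hb
      rw [hval] at this
      exact this
    obtain ⟨a, ha⟩ := hAne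
    obtain ⟨b, hb⟩ := hBne
    have ht1 : t0 ≤ t0 + n := by linarith
    have hVnn : ∀ i j, 0 ≤ V (t0 + n) t0 i j := fun i j =>
      Vnonneg (L := L) hM₁ hoff hdiag hV0 hVd ht0 ht1 i j
    have hrs : ∀ i, ∑ k, V (t0 + n) t0 i k = 1 := fun i =>
      rowsumV (L := L) hM₁ hdiag hbdd hV0 hVd ht0 ht1 i
    -- row a concentrated on A
    have hAin : (7:ℝ)/8 ≤ ∑ k ∈ A, V (t0 + n) t0 a k := by
      have hsplit := Finset.sum_add_sum_compl A (fun k => V (t0 + n) t0 a k)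
      rw [hrs a] at hsplit
      have := hmassA a ha
      linarith
    have hBin : (7:ℝ)/8 ≤ ∑ k ∈ B, V (t0 + n) t0 b k := by
      have hsplit := Finset.sum_add_sum_compl B (fun k => V (t0 + n) t0 b k)
      rw [hrs b] at hsplit
      have := hmassB b hb
      linarith
    have hAsub : A ⊆ Bᶜ := fun k hk =>
      Finset.mem_compl.2 (fun hkB => (Finset.disjoint_left.1 hdisj hk) hkB)
    have hBsub : B ⊆ Aᶜ := fun k hk =>
      Finset.mem_compl.2 (fun hkA => (Finset.disjoint_left.1 hdisj hkA) hk)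
    have hbA : ∑ k ∈ A, V (t0 + n) t0 b k ≤ 1/8 := by
      calc ∑ k ∈ A, V (t0 + n) t0 b k ≤ ∑ k ∈ Bᶜ, V (t0 + n) t0 b k :=
            Finset.sum_le_sum_of_subset_of_nonneg hAsub (fun k _ _ => hVnn b k)
        _ ≤ 1/8 := hmassB b hb
    have haB : ∑ k ∈ B, V (t0 + n) t0 a k ≤ 1/8 := by
      calc ∑ k ∈ B, V (t0 + n) t0 a k ≤ ∑ k ∈ Aᶜ, V (t0 + n) t0 a k :=
            Finset.sum_le_sum_of_subset_of_nonneg hBsub (fun k _ _ => hVnn a k)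
        _ ≤ 1/8 := hmassA a ha
    have hdiff : (3:ℝ)/2 ≤ ∑ k, |V (t0 + n) t0 a k - V (t0 + n) t0 b k| := by
      have h1 : ∑ k ∈ A, (V (t0 + n) t0 a k - V (t0 + n) t0 b k)
          ≤ ∑ k ∈ A, |V (t0 + n) t0 a k - V (t0 + n) t0 b k| :=
        Finset.sum_le_sum (fun k _ => le_abs_self _)
      have h2 : ∑ k ∈ B, (V (t0 + n) t0 b k - V (t0 + n) t0 a k)
          ≤ ∑ k ∈ B, |V (t0 + n) t0 a k - V (t0 + n) t0 b k| := by
        apply Finset.sum_le_sum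
        intro k _
        rw [abs_sub_comm]
        exact le_abs_self _
      have h3 : ∑ k ∈ A, |V (t0 + n) t0 a k - V (t0 + n) t0 b k|
          + ∑ k ∈ B, |V (t0 + n) t0 a k - V (t0 + n) t0 b k|
          ≤ ∑ k, |V (t0 + n) t0 a k - V (t0 + n) t0 b k| := by
        rw [← Finset.sum_union hdisj]
        exact Finset.sum_le_sum_of_subset_of_nonneg (Finset.subset_univ _)
          (fun k _ _ => abs_nonneg _)
      have h4 : ∑ k ∈ A, (V (t0 + n) t0 a k - V (t0 + n) t0 b k)
          = ∑ k ∈ A, V (t0 + n) t0 a k - ∑ k ∈ A, V (t0 + n) t0 b k :=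
        Finset.sum_sub_distrib ..
      have h5 : ∑ k ∈ B, (V (t0 + n) t0 b k - V (t0 + n) t0 a k)
          = ∑ k ∈ B, V (t0 + n) t0 b k - ∑ k ∈ B, V (t0 + n) t0 a k :=
        Finset.sum_sub_distrib ..
      linarith
    -- conclude 1 ≤ f n
    rw [hf]
    apply le_iSup_of_le ⟨t0, ht0⟩
    have hco : ((⟨t0, ht0⟩ : {x : ℝ // 0 ≤ x}) : ℝ) = t0 := rfl
    have haddc : (n:ℝ) + t0 = t0 + n := by ring
    have hdiam : (3:ℝ)/2 ≤ ⨆ i : Fin m, ⨆ j : Fin m,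
        ∑ k, |V ((n:ℝ) + t0) t0 i k - V ((n:ℝ) + t0) t0 j k| := by
      rw [haddc]
      calc (3:ℝ)/2 ≤ ∑ k, |V (t0 + n) t0 a k - V (t0 + n) t0 b k| := hdiff
        _ ≤ ⨆ j : Fin m, ∑ k, |V (t0 + n) t0 a k - V (t0 + n) t0 j k| :=
            le_ciSup (f := fun j : Fin m => ∑ k, |V (t0 + n) t0 a k - V (t0 + n) t0 j k|)
              (Set.Finite.bddAbove (Set.finite_range _)) b
        _ ≤ ⨆ i : Fin m, ⨆ j : Fin m, ∑ k, |V (t0 + n) t0 i k - V (t0 + n) t0 j k| :=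
            le_ciSup (f := fun i : Fin m => ⨆ j : Fin m,
              ∑ k, |V (t0 + n) t0 i k - V (t0 + n) t0 j k|)
              (Set.Finite.bddAbove (Set.finite_range _)) a
    have h1le : (1:ENNReal) ≤ ENNReal.ofReal (⨆ i : Fin m, ⨆ j : Fin m,
        ∑ k, |V ((n:ℝ) + t0) t0 i k - V ((n:ℝ) + t0) t0 j k|) :=
      ENNReal.one_le_ofReal.2 (by linarith)
    calc (1:ENNReal) = 1 ^ (1/(n:ℝ)) := (ENNReal.one_rpow _).symm
      _ ≤ (ENNReal.ofReal (⨆ i : Fin m, ⨆ j : Fin m,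
          ∑ k, |V ((n:ℝ) + t0) t0 i k - V ((n:ℝ) + t0) t0 j k|)) ^ (1/(n:ℝ)) :=
        ENNReal.rpow_le_rpow h1le (by positivity)
  have hfr : ∃ᶠ t in atTop, (1:ENNReal) ≤ f t := by
    rw [Filter.frequently_atTop]
    intro a
    refine ⟨((max 1 ⌈a⌉₊ : ℕ) : ℝ), ?_, hfreq _ (le_max_left _ _)⟩
    calc a ≤ (⌈a⌉₊ : ℝ) := Nat.le_ceil a
      _ ≤ ((max 1 ⌈a⌉₊ : ℕ) : ℝ) := by exact_mod_cast le_max_right 1 ⌈a⌉₊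
  have hge := Filter.le_limsup_of_frequently_le hfr
  exact absurd (lt_of_le_of_lt hge hlim) (lt_irrefl _)

end Assemble

section Assemble2

open Filter

variable {m : ℕ} {L : ℝ → Matrix (Fin m) (Fin m) ℝ} {M₁ : ℝ}
  {V : ℝ → ℝ → Matrix (Fin m) (Fin m) ℝ}

variable (hM₁ : 0 < M₁)
  (hmeas : ∀ i j, Measurable fun t => L t i j)
  (hoff : ∀ t, 0 ≤ t → ∀ i j, i ≠ j → 0 ≤ L t i j)
  (hdiag : ∀ t, 0 ≤ t → ∀ i, L t i i = -∑ j ∈ ({i}ᶜ : Finset (Fin m)), L t i j)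
  (hbdd : ∀ t, 0 ≤ t → ∀ i j, |L t i j| ≤ M₁)
  (hV0 : ∀ t0, 0 ≤ t0 → V t0 t0 = 1)
  (hVd : ∀ t0, 0 ≤ t0 → ∀ t ∈ Set.Ici t0, ∀ i j,
      HasDerivAt (fun τ => V τ t0 i j) (∑ k, L t i k * V t t0 k j) t)

include hM₁ hmeas hoff hdiag hbdd hV0 hVd in
lemma sufficiency (hm : 0 < m) {δ T : ℝ} (hδ : 0 < δ) (hT : 0 < T)
    (htree : ∀ t0, 0 ≤ t0 → ∃ r : Fin m, ∀ i : Fin m,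
      Relation.ReflTransGen (fun a b => δ < ∫ τ in t0..(t0 + T), L τ b a) r i) :
    limsup (fun t : ℝ => ⨆ t0 : {x : ℝ // 0 ≤ x},
        (ENNReal.ofReal (⨆ i : Fin m, ⨆ j : Fin m,
            ∑ k, |V (t + t0) t0 i k - V (t + t0) t0 j k|)) ^ (1 / t)) atTop < 1 := by
  classical
  haveI : Nonempty {x : ℝ // 0 ≤ x} := ⟨⟨0, le_refl 0⟩⟩
  haveI : Nonempty (Fin m) := ⟨⟨0, hm⟩⟩
  set f : ℝ → ENNReal := fun t : ℝ => ⨆ t0 : {x : ℝ // 0 ≤ x},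
      (ENNReal.ofReal (⨆ i : Fin m, ⨆ j : Fin m,
          ∑ k, |V (t + t0) t0 i k - V (t + t0) t0 j k|)) ^ (1 / t) with hf
  by_cases hm1 : m = 1
  · -- trivial case: diameter is 0
    subst hm1
    have hev : ∀ᶠ t in atTop, f t ≤ 0 := by
      filter_upwards [eventually_ge_atTop (1:ℝ)] with t ht1
      rw [hf]
      apply iSup_le
      rintro ⟨t0, ht0⟩
      have hzero : (⨆ i : Fin 1, ⨆ j : Fin 1,
          ∑ k, |V (t + t0) t0 i k - V (t + t0) t0 j k|) = 0 := by
        apply le_antisymm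
        · apply ciSup_le; intro i
          apply ciSup_le; intro j
          have : i = j := Subsingleton.elim i j
          subst this
          simp
        · have h1 := le_ciSup (f := fun i : Fin 1 => ⨆ j : Fin 1,
              ∑ k, |V (t + t0) t0 i k - V (t + t0) t0 j k|)
              (Set.Finite.bddAbove (Set.finite_range _)) (0 : Fin 1)
          have h2 := le_ciSup (f := fun j : Fin 1 =>
              ∑ k, |V (t + t0) t0 0 k - V (t + t0) t0 j k|)
              (Set.Finite.bddAbove (Set.finite_range _)) (0 : Fin 1)
          simp only [sub_self, abs_zero, Finset.sum_const_zero] at h2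
          exact le_trans h2 h1
      rw [hzero]
      rw [ENNReal.ofReal_zero, ENNReal.zero_rpow_of_pos (by positivity : (0:ℝ) < 1/t)]
    calc limsup f atTop ≤ limsup (fun _ : ℝ => (0:ENNReal)) atTop :=
          limsup_le_limsup hev
      _ = 0 := limsup_const 0
      _ < 1 := zero_lt_one
  · have hm2 : 2 ≤ m := by omega
    set c : ℝ := min δ 1 * Real.exp (-(M₁ * T)) with hcdef
    set η : ℝ := c^(m-1) with hηdef
    set q : ℝ := 1 - η with hqdef
    set S : ℝ := ((m-1:ℕ):ℝ)*T with hSdef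
    have hc0 : 0 < c := mul_pos (lt_min hδ zero_lt_one) (Real.exp_pos _)
    have hc1 : c < 1 := by
      rw [hcdef]
      calc min δ 1 * Real.exp (-(M₁ * T)) ≤ 1 * Real.exp (-(M₁ * T)) :=
            mul_le_mul_of_nonneg_right (min_le_right δ 1) (Real.exp_pos _).le
        _ = Real.exp (-(M₁ * T)) := one_mul _
        _ < 1 := Real.exp_lt_one_iff.2 (by nlinarith)
    have hη0 : 0 < η := pow_pos hc0 _
    have hη1 : η < 1 := pow_lt_one₀ hc0.le hc1 (by omega)
    have hq0 : 0 < q := by rw [hqdef]; linarith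
    have hq1 : q < 1 := by rw [hqdef]; linarith
    have hS0 : 0 < S := by
      rw [hSdef]
      apply mul_pos _ hT
      have h1 : (1:ℕ) ≤ m - 1 := by omega
      calc (0:ℝ) < 1 := zero_lt_one
        _ ≤ ((m-1:ℕ):ℝ) := by exact_mod_cast h1
    set Creal : ℝ := q ^ ((1:ℝ)/(2*S)) with hCdef
    have hCreal1 : Creal < 1 := Real.rpow_lt_one hq0.le hq1 (by positivity)
    have hC1 : ENNReal.ofReal Creal < 1 := by
      rw [← ENNReal.ofReal_one]
      exact ENNReal.ofReal_lt_ofReal_iff_of_nonneg (by positivity) |>.2 hCreal1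
    -- the limit of the comparison function
    have h1t : Tendsto (fun t : ℝ => 1/t) atTop (nhds 0) := by
      simpa [one_div] using tendsto_inv_atTop_zero
    have hw : Tendsto (fun t : ℝ => (2:ℝ)^(1/t) * q^(1/S - 1/t)) atTop
        (nhds ((2:ℝ)^(0:ℝ) * q^(1/S - 0))) := by
      apply Tendsto.mul
      · exact (tendsto_const_nhds.rpow h1t (Or.inl two_ne_zero))
      · exact (tendsto_const_nhds.rpow (tendsto_const_nhds.sub h1t) (Or.inl hq0.ne'))
    have hwval : (2:ℝ)^(0:ℝ) * q^(1/S - 0) = q^(1/S) := by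
      rw [Real.rpow_zero, sub_zero, one_mul]
    have hlt : q^((1:ℝ)/S) < Creal := by
      rw [hCdef]
      apply Real.rpow_lt_rpow_of_exponent_gt hq0 hq1
      rw [div_lt_div_iff₀ (by positivity) hS0]
      linarith
    rw [hwval] at hw
    have hevw : ∀ᶠ t in atTop, (2:ℝ)^(1/t) * q^(1/S - 1/t) < Creal :=
      hw.eventually_lt_const hlt
    have hev : ∀ᶠ t in atTop, f t ≤ ENNReal.ofReal Creal := by
      filter_upwards [hevw, eventually_ge_atTop (1:ℝ)] with t hwlt ht1
      have ht0' : (0:ℝ) < t := lt_of_lt_of_le zero_lt_one ht1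
      rw [hf]
      apply iSup_le
      rintro ⟨t0, ht0⟩
      set N : ℕ := ⌊t / S⌋₊ with hNdef
      have hBpos : (0:ℝ) < 2 * q^N := by positivity
      have hdb : ∀ i j : Fin m, ∑ k, |V (t + t0) t0 i k - V (t + t0) t0 j k|
          ≤ 2 * q^N := by
        intro i j
        have := decay_all (L := L) hM₁ hmeas hoff hdiag hbdd hV0 hVd hm2 hδ hT htree
          ht0 ht0'.le i j
        rw [add_comm t0 t] at this
        exact this
      have hdiam : (⨆ i : Fin m, ⨆ j : Fin m,
          ∑ k, |V (t + t0) t0 i k - V (t + t0) t0 j k|) ≤ 2 * q^N :=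
        ciSup_le (fun i => ciSup_le (fun j => hdb i j))
      have hreal : (2 * q^N) ^ ((1:ℝ)/t) ≤ Creal := by
        have hexpfloor : t/S - 1 ≤ (N:ℝ) := by
          have := Nat.sub_one_lt_floor (t/S)
          rw [hNdef]
          linarith
        have hbase : 2 * q^N ≤ 2 * q^(t/S - 1) := by
          have : (q:ℝ)^N = q^((N:ℝ)) := by rw [Real.rpow_natCast]
          rw [this]
          have := Real.rpow_le_rpow_of_exponent_ge hq0 hq1.le hexpfloor
          linarith
        calc (2 * q^N) ^ ((1:ℝ)/t) ≤ (2 * q^(t/S - 1)) ^ ((1:ℝ)/t) :=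
              Real.rpow_le_rpow (by positivity) hbase (by positivity)
          _ = (2:ℝ)^((1:ℝ)/t) * (q^(t/S - 1))^((1:ℝ)/t) :=
              Real.mul_rpow (by norm_num) (Real.rpow_nonneg hq0.le _)
          _ = (2:ℝ)^((1:ℝ)/t) * q^((t/S - 1) * (1/t)) := by
              rw [← Real.rpow_mul hq0.le]
          _ = (2:ℝ)^((1:ℝ)/t) * q^(1/S - 1/t) := by
              have hexp : (t/S - 1) * (1/t) = 1/S - 1/t := by
                field_simp
              rw [hexp]
          _ ≤ Creal := hwlt.le
      calc (ENNReal.ofReal (⨆ i : Fin m, ⨆ j : Fin m,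
            ∑ k, |V (t + t0) t0 i k - V (t + t0) t0 j k|)) ^ (1/t)
          ≤ (ENNReal.ofReal (2 * q^N)) ^ ((1:ℝ)/t) :=
            ENNReal.rpow_le_rpow (ENNReal.ofReal_le_ofReal hdiam) (by positivity)
        _ = ENNReal.ofReal ((2 * q^N) ^ ((1:ℝ)/t)) :=
            ENNReal.ofReal_rpow_of_pos hBpos
        _ ≤ ENNReal.ofReal Creal := ENNReal.ofReal_le_ofReal hreal
    calc limsup f atTop ≤ limsup (fun _ : ℝ => ENNReal.ofReal Creal) atTop :=
          limsup_le_limsup hev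
      _ = ENNReal.ofReal Creal := limsup_const _
      _ < 1 := hC1

end Assemble2

/-- Theorem 3: under Assumption A4, the Hajnal diameter of the linear
system `u̇ = L(t)u`, namely
`diam(𝓛) = limsup_{t→∞} sup_{t0≥0} [diam(V(t+t0,t0))]^{1/t}` (computed in `ℝ≥0∞`
with `diam(V) = max_{i,j} Σ_k |v_ik − v_jk|`), satisfies `diam(𝓛) < 1` if and only
if there exist `δ > 0` and `T > 0` such that for every `t0 ≥ 0` the graph
`G([t0,t0+T],δ)` (edge from `j` to `i` iff `∫_{t0}^{t0+T} l_ij > δ`) has a spanning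
tree. -/
theorem stmt_2 (m : ℕ) (hm : 0 < m)
    (L : ℝ → Matrix (Fin m) (Fin m) ℝ) (M₁ : ℝ) (hM₁ : 0 < M₁)
    (hmeas : ∀ i j, Measurable fun t => L t i j)
    (hoff : ∀ t, 0 ≤ t → ∀ i j, i ≠ j → 0 ≤ L t i j)
    (hdiag : ∀ t, 0 ≤ t → ∀ i, L t i i = -∑ j ∈ ({i}ᶜ : Finset (Fin m)), L t i j)
    (hbdd : ∀ t, 0 ≤ t → ∀ i j, |L t i j| ≤ M₁)
    (V : ℝ → ℝ → Matrix (Fin m) (Fin m) ℝ)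
    (hV0 : ∀ t0, 0 ≤ t0 → V t0 t0 = 1)
    (hVd : ∀ t0, 0 ≤ t0 → ∀ t ∈ Set.Ici t0, ∀ i j,
        HasDerivAt (fun τ => V τ t0 i j) (∑ k, L t i k * V t t0 k j) t) :
    limsup (fun t : ℝ => ⨆ t0 : {x : ℝ // 0 ≤ x},
        (ENNReal.ofReal (⨆ i : Fin m, ⨆ j : Fin m,
            ∑ k, |V (t + t0) t0 i k - V (t + t0) t0 j k|)) ^ (1 / t)) atTop
        < 1
      ↔ ∃ δ > (0:ℝ), ∃ T > (0:ℝ), ∀ t0, 0 ≤ t0 →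
          ∃ r : Fin m, ∀ i : Fin m,
            Relation.ReflTransGen (fun a b => δ < ∫ τ in t0..(t0 + T), L τ b a) r i := by
  constructor
  · intro hlim
    exact necessity (L := L) hM₁ hmeas hoff hdiag hbdd hV0 hVd hm hlim
  · rintro ⟨δ, hδ, T, hT, htree⟩
    exact sufficiency (L := L) hM₁ hmeas hoff hdiag hbdd hV0 hVd hm hδ hT htree
end

section
/- Under Assumption A1, let s : [t0,∞) → ℝ^n solve ṡ(t) = f(s(t)), let u : [t0,∞) → ℝ^n solve u̇(t) = Df(s(t))u(t) with u(t0) = u0, and let δx : [t0,∞) → ℝ^{nm} solve the variational equation δẋ(t) = DF^t(ŝ(t))δx(t) with δx(t0) = (u0,…,u0) ∈ ℝ^{nm} (i.e. 1_m ⊗ u0), where ŝ(t) = (s(t),…,s(t)). Then δx(t) = (u(t),…,u(t)) = 1_m ⊗ u(t) for all t ≥ t0. Consequently, the block row sums of the fundamental solution U(t,t0,s0) = (U_ij(t,t0,s0))_{i,j=1}^m of the variational equation satisfy Σ_{j=1}^m U_ij(t,t0,s0) = Ŭ(t,t0,s0) for every i, where Ŭ(t,t0,s0) is the fundamental solution of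 u̇ = Df(s(t))u with Ŭ(t0,t0,s0) = I_n. -/
open Set


lemma pi_pi_expansion {n m : ℕ} (x : Fin m → Fin n → ℝ) :
    x = ∑ p : Fin m × Fin n,
      x p.1 p.2 • (Pi.single p.1 (Pi.single p.2 1) : Fin m → Fin n → ℝ) := by
  funext i j
  simp [Finset.sum_apply, Pi.single_apply, Fintype.sum_prod_type,
    apply_ite (fun g : Fin n → ℝ => g j), Finset.sum_ite_eq, eq_comm]

lemma pi_expansion {n : ℕ} (x : Fin n → ℝ) :
    x = ∑ l : Fin n, x l • (Pi.single l 1 : Fin n → ℝ) := by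
  funext j
  simp [Finset.sum_apply, Pi.single_apply, eq_comm]

lemma fderiv_proj_comp {E : Type*} [NormedAddCommGroup E] [NormedSpace ℝ E]
    {ι : Type*} [Fintype ι] {G : ι → Type*} [∀ i, NormedAddCommGroup (G i)]
    [∀ i, NormedSpace ℝ (G i)]
    (g : E → ∀ i, G i) {y : E} (hg : DifferentiableAt ℝ g y) (i : ι) :
    fderiv ℝ (fun x => g x i) y = (ContinuousLinearMap.proj i).comp (fderiv ℝ g y) := by
  have := ((ContinuousLinearMap.proj (R := ℝ) (φ := G) i).hasFDerivAt
      (x := g y)).comp y hg.hasFDerivAt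
  simpa [Function.comp_def] using this.fderiv



/-- Lemma 5, item 1: under Assumption A1, a solution of the variational
equation with diagonal initial data `1_m ⊗ u0` stays diagonal and equals `1_m ⊗ u(t)`,
where `u` solves `u̇ = Df(s(t))u`; consequently the block row sums of the fundamental
solution `U(t,t0,s0)` all equal the fundamental solution `Ŭ(t,t0,s0)` of
`u̇ = Df(s(t))u`. -/
theorem stmt_7 (n m : ℕ) (hn : 0 < n) (hm : 0 < m)
    (F : (Fin m → Fin n → ℝ) → ℝ → Fin m → Fin n → ℝ)
    (f : (Fin n → ℝ) → Fin n → ℝ)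
    -- Assumption A1
    (hA1a : ∀ (s : Fin n → ℝ) (t : ℝ), 0 ≤ t → ∀ i, F (fun _ => s) t i = f s)
    (hA1b : ∀ t : ℝ, 0 ≤ t → ContDiff ℝ 1 fun x => F x t)
    (hA1c : ∀ K : Set (Fin m → Fin n → ℝ), IsCompact K →
      ∃ M : ℝ, ∀ t, 0 ≤ t → ∀ x ∈ K, ‖fderiv ℝ (fun y => F y t) x‖ ≤ M)
    (hA1d : ∀ K : Set (Fin m → Fin n → ℝ), IsCompact K →
      ∃ C : ℝ, ∀ t, 0 ≤ t → ∀ x ∈ K, ∀ y ∈ K,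
        ‖fderiv ℝ (fun z => F z t) x - fderiv ℝ (fun z => F z t) y‖ ≤ C * ‖x - y‖)
    (hA1e : ∀ x, Measurable (fun t => F x t) ∧
      ∀ v, Measurable fun t => fderiv ℝ (fun y => F y t) x v)
    (t0 : ℝ) (ht0 : 0 ≤ t0)
    (s : ℝ → Fin n → ℝ) (hs : ∀ t ∈ Set.Ici t0, HasDerivAt s (f (s t)) t) :
    (∀ (u0 : Fin n → ℝ) (u : ℝ → Fin n → ℝ) (δx : ℝ → Fin m → Fin n → ℝ),
      (∀ t ∈ Set.Ici t0, HasDerivAt u (fderiv ℝ f (s t) (u t)) t) →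
      u t0 = u0 →
      (∀ t ∈ Set.Ici t0, HasDerivAt δx
          (fun i => fderiv ℝ (fun x => F x t i) (fun _ => s t) (δx t)) t) →
      δx t0 = (fun _ => u0) →
      ∀ t ∈ Set.Ici t0, δx t = fun _ => u t) ∧
    (∀ (U : ℝ → Matrix (Fin m × Fin n) (Fin m × Fin n) ℝ)
        (Ub : ℝ → Matrix (Fin n) (Fin n) ℝ),
      U t0 = 1 →
      (∀ t ∈ Set.Ici t0, ∀ p q : Fin m × Fin n,
        HasDerivAt (fun τ => U τ p q)
          (∑ q' : Fin m × Fin n,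
            fderiv ℝ (fun x => F x t p.1) (fun _ => s t)
                (Pi.single q'.1 (Pi.single q'.2 1)) p.2
              * U t q' q) t) →
      Ub t0 = 1 →
      (∀ t ∈ Set.Ici t0, ∀ r c : Fin n,
        HasDerivAt (fun τ => Ub τ r c)
          (∑ l, fderiv ℝ f (s t) (Pi.single l 1) r * Ub t l c) t) →
      ∀ t ∈ Set.Ici t0, ∀ (i : Fin m) (r c : Fin n),
        ∑ j : Fin m, U t (i, r) (j, c) = Ub t r c) := by
  classical
  have hdiffF : ∀ t : ℝ, 0 ≤ t → Differentiable ℝ (fun x => F x t) :=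
    fun t ht => (hA1b t ht).differentiable one_ne_zero
  have comp_fd : ∀ t : ℝ, 0 ≤ t → ∀ (i : Fin m) (y v : Fin m → Fin n → ℝ),
      fderiv ℝ (fun x => F x t i) y v = fderiv ℝ (fun x => F x t) y v i := by
    intro t ht i y v
    rw [fderiv_proj_comp _ ((hdiffF t ht) y) i]
    rfl
  set L : (Fin n → ℝ) →L[ℝ] (Fin m → Fin n → ℝ) :=
    ContinuousLinearMap.pi (fun _ : Fin m => ContinuousLinearMap.id ℝ (Fin n → ℝ)) with hL
  have hfd : ∀ t : ℝ, 0 ≤ t → ∀ (i : Fin m) (z v : Fin n → ℝ),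
      fderiv ℝ f z v = fderiv ℝ (fun x => F x t) (fun _ => z) (fun _ => v) i := by
    intro t ht i z v
    have hdi : DifferentiableAt ℝ (fun x => F x t i) (fun _ => z : Fin m → Fin n → ℝ) := by
      have := ((ContinuousLinearMap.proj (R := ℝ)
        (φ := fun _ : Fin m => Fin n → ℝ) i).differentiableAt).comp
        (fun _ => z : Fin m → Fin n → ℝ) ((hdiffF t ht) _)
      simpa [Function.comp_def] using this
    have h1 : HasFDerivAt (fun x => F x t i)
        ((ContinuousLinearMap.proj i).comp (fderiv ℝ (fun x => F x t) (fun _ => z)))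
        (L z) := by
      have := hdi.hasFDerivAt
      rwa [fderiv_proj_comp _ ((hdiffF t ht) _) i] at this
    have h2 : HasFDerivAt (fun w => F (L w) t i)
        (((ContinuousLinearMap.proj i).comp
          (fderiv ℝ (fun x => F x t) (fun _ => z))).comp L) z :=
      h1.comp z L.hasFDerivAt
    have h3 : HasFDerivAt f
        (((ContinuousLinearMap.proj i).comp
          (fderiv ℝ (fun x => F x t) (fun _ => z))).comp L) z := by
      refine h2.congr_of_eventuallyEq (Filter.Eventually.of_forall fun w => ?_)
      exact (hA1a w t ht i).symm
    rw [h3.fderiv]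
    rfl
  have part1 : ∀ (u0 : Fin n → ℝ) (u : ℝ → Fin n → ℝ) (δx : ℝ → Fin m → Fin n → ℝ),
      (∀ t ∈ Set.Ici t0, HasDerivAt u (fderiv ℝ f (s t) (u t)) t) →
      u t0 = u0 →
      (∀ t ∈ Set.Ici t0, HasDerivAt δx
          (fun i => fderiv ℝ (fun x => F x t i) (fun _ => s t) (δx t)) t) →
      δx t0 = (fun _ => u0) →
      ∀ t ∈ Set.Ici t0, δx t = fun _ => u t := by
    intro u0 u δx hu hu0 hδ hδ0 t ht
    have hst : ContinuousOn (fun τ => (fun _ => s τ : Fin m → Fin n → ℝ)) (Icc t0 t) :=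
      continuousOn_pi.2 fun _ τ hτ =>
        (hs τ (mem_Ici.mpr hτ.1)).continuousAt.continuousWithinAt
    obtain ⟨M, hM⟩ := hA1c ((fun τ => (fun _ => s τ : Fin m → Fin n → ℝ)) '' Icc t0 t)
      (isCompact_Icc.image_of_continuousOn hst)
    set v : ℝ → (Fin m → Fin n → ℝ) → (Fin m → Fin n → ℝ) :=
      fun τ x => if τ ∈ Icc t0 t then fderiv ℝ (fun y => F y τ) (fun _ => s τ) x else 0
      with hv_def
    have hv : ∀ τ, LipschitzWith M.toNNReal (v τ) := by
      intro τ
      by_cases h : τ ∈ Icc t0 t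
      · simp only [hv_def, if_pos h]
        refine (fderiv ℝ (fun y => F y τ) (fun _ => s τ)).lipschitz.weaken ?_
        have hle : ‖fderiv ℝ (fun y => F y τ) (fun _ => s τ)‖ ≤ M :=
          hM τ (le_trans ht0 h.1) _ ⟨τ, h, rfl⟩
        rw [← norm_toNNReal]
        exact Real.toNNReal_le_toNNReal hle
      · simp only [hv_def, if_neg h]
        exact (LipschitzWith.const 0).weaken zero_le
    have hδcont : ContinuousOn δx (Icc t0 t) := fun τ hτ =>
      (hδ τ (mem_Ici.mpr hτ.1)).continuousAt.continuousWithinAt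
    have hucont : ContinuousOn (fun τ => (fun _ => u τ : Fin m → Fin n → ℝ)) (Icc t0 t) :=
      continuousOn_pi.2 fun _ τ hτ =>
        (hu τ (mem_Ici.mpr hτ.1)).continuousAt.continuousWithinAt
    have hf' : ∀ τ ∈ Ico t0 t, HasDerivWithinAt δx (v τ (δx τ)) (Ici τ) τ := by
      intro τ hτ
      have h0 : (0:ℝ) ≤ τ := le_trans ht0 hτ.1
      have hd := (hδ τ (mem_Ici.mpr hτ.1)).hasDerivWithinAt (s := Ici τ)
      have heq : v τ (δx τ)
          = fun i => fderiv ℝ (fun x => F x τ i) (fun _ => s τ) (δx τ) := by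
        simp only [hv_def, if_pos (mem_Icc_of_Ico hτ)]
        funext i
        exact (comp_fd τ h0 i _ _).symm
      rw [heq]; exact hd
    have hg' : ∀ τ ∈ Ico t0 t,
        HasDerivWithinAt (fun τ => (fun _ => u τ : Fin m → Fin n → ℝ))
          (v τ (fun _ => u τ)) (Ici τ) τ := by
      intro τ hτ
      have h0 : (0:ℝ) ≤ τ := le_trans ht0 hτ.1
      have hd : HasDerivAt (fun τ => (fun _ => u τ : Fin m → Fin n → ℝ))
          (fun _ => fderiv ℝ f (s τ) (u τ)) τ :=
        hasDerivAt_pi.2 fun _ => hu τ (mem_Ici.mpr hτ.1)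
      have heq : v τ (fun _ => u τ) = (fun _ => fderiv ℝ f (s τ) (u τ) :
          Fin m → Fin n → ℝ) := by
        simp only [hv_def, if_pos (mem_Icc_of_Ico hτ)]
        funext i
        exact (hfd τ h0 i (s τ) (u τ)).symm
      rw [heq]; exact hd.hasDerivWithinAt
    have ha : δx t0 = fun _ => u t0 := by rw [hδ0, hu0]
    exact ODE_solution_unique hv hδcont hf' hucont hg' ha ⟨ht, le_rfl⟩
  refine ⟨part1, ?_⟩
  intro U Ub hU0 hU hUb0 hUb t ht i r c
  set u : ℝ → Fin n → ℝ := fun τ r' => Ub τ r' c with hu_def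
  set δx : ℝ → Fin m → Fin n → ℝ := fun τ i' r' => ∑ j, U τ (i', r') (j, c) with hδx_def
  have hu : ∀ τ ∈ Set.Ici t0, HasDerivAt u (fderiv ℝ f (s τ) (u τ)) τ := by
    intro τ hτ
    refine hasDerivAt_pi.2 fun r' => ?_
    have hd := hUb τ hτ r' c
    have heq : fderiv ℝ f (s τ) (u τ) r'
        = ∑ l, fderiv ℝ f (s τ) (Pi.single l 1) r' * Ub τ l c := by
      conv_lhs => rw [pi_expansion (u τ)]
      rw [map_sum]
      simp [Finset.sum_apply, mul_comm, hu_def]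
    rw [show (fun τ' => u τ' r') = fun τ' => Ub τ' r' c from rfl] at *
    rw [heq]; exact hd
  have hδ : ∀ τ ∈ Set.Ici t0, HasDerivAt δx
      (fun i' => fderiv ℝ (fun x => F x τ i') (fun _ => s τ) (δx τ)) τ := by
    intro τ hτ
    have h0 : (0:ℝ) ≤ τ := le_trans ht0 hτ
    refine hasDerivAt_pi.2 fun i' => hasDerivAt_pi.2 fun r' => ?_
    have hsum : HasDerivAt (fun τ' => ∑ j, U τ' (i', r') (j, c))
        (∑ j, ∑ q' : Fin m × Fin n, fderiv ℝ (fun x => F x τ i') (fun _ => s τ)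
          (Pi.single q'.1 (Pi.single q'.2 1)) r' * U τ q' (j, c)) τ :=
      HasDerivAt.fun_sum fun j _ => hU τ hτ (i', r') (j, c)
    have heq : fderiv ℝ (fun x => F x τ i') (fun _ => s τ) (δx τ) r'
        = ∑ j, ∑ q' : Fin m × Fin n, fderiv ℝ (fun x => F x τ i') (fun _ => s τ)
          (Pi.single q'.1 (Pi.single q'.2 1)) r' * U τ q' (j, c) := by
      rw [Finset.sum_comm]
      conv_lhs => rw [pi_pi_expansion (δx τ)]
      rw [map_sum]
      simp only [map_smul, Finset.sum_apply, Pi.smul_apply, smul_eq_mul]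
      refine Finset.sum_congr rfl fun q' _ => ?_
      rw [hδx_def]
      simp [Finset.sum_mul, Finset.mul_sum, mul_comm]
    exact heq ▸ hsum
  have h0 : δx t0 = fun _ => u t0 := by
    funext i' r'
    simp only [hδx_def, hu_def, hU0, hUb0]
    rcases eq_or_ne r' c with h | h <;>
      simp [Matrix.one_apply, Prod.ext_iff, h, Finset.sum_ite_eq]
  have key := part1 (u t0) u δx hu rfl hδ h0 t ht
  exact congrFun (congrFun key i) r
end

section
/- Fix m, n ≥ 1. Let P ∈ ℝ^{nm×nm} be an orthogonal matrix whose first n columns form the block P₁ = (1/√m)·(1_m ⊗ P₀) for some orthogonal matrix P₀ ∈ ℝ^{n×n}, and let P₂ ∈ ℝ^{nm×n(m−1)} consist of the remaining n(m−1) columns. Then there exist constants c, C > 0 (depending only on m, n and the chosen matrix norms) such that for every matrix U ∈ ℝ^{nm×nm}, written in block form (U_ij)_{i,j=1}^m with U_ij ∈ ℝ^{n×n}, whose block row sums Σ_{j=1}^m U_ij are independent of i, one has c·‖P₂ᵀ U P₂‖ ≤ diam(U) ≤ C·‖P₂ᵀ U P₂‖, where diam(U) = max_{i,j} ‖U_i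 − U_j‖ and U_i = [U_i1, …, U_im] denotes the i-th block row. -/
open Matrix

set_option maxHeartbeats 1000000 in
/-- for an orthogonal `P = [P₁ P₂] ∈ ℝ^{nm×nm}` with
`P₁ = (1/√m)(1_m ⊗ P₀)`, `P₀` orthogonal, the Hajnal diameter
`diam(U) = max_{i,i'} ‖U_i − U_{i'}‖` (block rows measured in the entrywise ℓ¹ norm)
is equivalent, with constants depending only on `m`, `n` (and the norms), to
`‖P₂ᵀ U P₂‖` (entrywise ℓ¹ norm), uniformly over all `U` whose block row sums
`Σ_j U_ij` are independent of `i`. -/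
theorem stmt_9 (m n : ℕ) (hm : 0 < m) (hn : 0 < n) :
    ∃ c C : ℝ, 0 < c ∧ 0 < C ∧
      ∀ (P₀ : Matrix (Fin n) (Fin n) ℝ)
        (P₁ : Matrix (Fin m × Fin n) (Fin n) ℝ)
        (P₂ : Matrix (Fin m × Fin n) (Fin (n * (m - 1))) ℝ),
        P₀ᵀ * P₀ = 1 →
        (∀ (p : Fin m × Fin n) (c' : Fin n),
          P₁ p c' = (Real.sqrt m)⁻¹ * P₀ p.2 c') →
        P₁ᵀ * P₁ = 1 →
        P₂ᵀ * P₂ = 1 →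
        P₁ᵀ * P₂ = 0 →
        P₁ * P₁ᵀ + P₂ * P₂ᵀ = 1 →
        ∀ U : Matrix (Fin m × Fin n) (Fin m × Fin n) ℝ,
          (∀ (i i' : Fin m) (r c' : Fin n),
            ∑ j : Fin m, U (i, r) (j, c') = ∑ j : Fin m, U (i', r) (j, c')) →
          c * (∑ a, ∑ b, |(P₂ᵀ * U * P₂) a b|)
              ≤ (⨆ i : Fin m, ⨆ i' : Fin m,
                  ∑ r : Fin n, ∑ q : Fin m × Fin n, |U (i, r) q - U (i', r) q|) ∧
            (⨆ i : Fin m, ⨆ i' : Fin m,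
                ∑ r : Fin n, ∑ q : Fin m × Fin n, |U (i, r) q - U (i', r) q|)
              ≤ C * (∑ a, ∑ b, |(P₂ᵀ * U * P₂) a b|) := by
  haveI : Nonempty (Fin m) := ⟨⟨0, hm⟩⟩
  set K : ℝ := ((n * (m - 1) : ℕ) : ℝ) ^ 2 * m with hKdef
  have hK0 : 0 ≤ K := by positivity
  refine ⟨(K + 1)⁻¹, 2 * (n : ℝ) ^ 2 * m + 1, by positivity, by positivity, ?_⟩
  intro P₀ P₁ P₂ h₁ h₂ h₃ h₄ h₅ h₆ U hU
  set i₀ : Fin m := ⟨0, hm⟩ with hi₀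
  set W := P₂ᵀ * U * P₂ with hWdef
  set E := P₂ * W * P₂ᵀ with hEdef
  set g : Fin m → Fin m → ℝ :=
    fun i i' => ∑ r : Fin n, ∑ q : Fin m × Fin n, |U (i, r) q - U (i', r) q| with hgdef
  set diam := ⨆ i : Fin m, ⨆ i' : Fin m, g i i' with hdiamdef
  set S := ∑ a, ∑ b, |W a b| with hSdef
  have hS0 : 0 ≤ S := Finset.sum_nonneg fun _ _ => Finset.sum_nonneg fun _ _ => abs_nonneg _
  -- entries of P₂ are bounded by 1
  have hP2bound : ∀ p a, |P₂ p a| ≤ 1 := by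
    intro p a
    have h := congrFun (congrFun h₄ a) a
    simp only [Matrix.mul_apply, Matrix.transpose_apply, Matrix.one_apply_eq] at h
    refine abs_le_one_iff_mul_self_le_one.mpr ?_
    calc P₂ p a * P₂ p a ≤ ∑ x, P₂ x a * P₂ x a :=
          Finset.single_le_sum (f := fun x => P₂ x a * P₂ x a)
            (fun i _ => mul_self_nonneg _) (Finset.mem_univ p)
      _ = 1 := h
  -- rows of P₁ * X don't depend on the block index
  have hL : ∀ (X : Matrix (Fin n) (Fin m × Fin n) ℝ) (i i' : Fin m) (r : Fin n)
      (q : Fin m × Fin n), (P₁ * X) (i, r) q = (P₁ * X) (i', r) q := by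
    intro X i i' r q
    rw [Matrix.mul_apply, Matrix.mul_apply]
    exact Finset.sum_congr rfl fun c _ => by rw [h₂ (i, r) c, h₂ (i', r) c]
  -- rows of U * P₁ don't depend on the block index
  have hR : ∀ (i i' : Fin m) (r : Fin n) (c : Fin n),
      (U * P₁) (i, r) c = (U * P₁) (i', r) c := by
    intro i i' r c
    have hform : ∀ i : Fin m, (U * P₁) (i, r) c
        = ∑ s : Fin n, (∑ j : Fin m, U (i, r) (j, s)) * ((Real.sqrt m)⁻¹ * P₀ s c) := by
      intro i
      rw [Matrix.mul_apply, Fintype.sum_prod_type, Finset.sum_comm]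
      refine Finset.sum_congr rfl fun s _ => ?_
      rw [Finset.sum_mul]
      exact Finset.sum_congr rfl fun j _ => by rw [h₂ (j, s) c]
    rw [hform i, hform i']
    exact Finset.sum_congr rfl fun s _ => by rw [hU i i' r s]
  -- the decomposition U - E
  have hdecomp : U - E
      = P₁ * (P₁ᵀ * U) + (U * P₁) * P₁ᵀ - P₁ * (P₁ᵀ * ((U * P₁) * P₁ᵀ)) := by
    have hPP : P₂ * P₂ᵀ = 1 - P₁ * P₁ᵀ := eq_sub_of_add_eq' h₆
    have hE2 : E = (P₂ * P₂ᵀ) * U * (P₂ * P₂ᵀ) := by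
      simp only [hEdef, hWdef, Matrix.mul_assoc]
    rw [hE2, hPP]
    simp only [Matrix.mul_sub, Matrix.sub_mul, Matrix.one_mul, Matrix.mul_one,
      Matrix.mul_assoc]
    abel
  have hconst : ∀ (i i' : Fin m) (r : Fin n) (q : Fin m × Fin n),
      (U - E) (i, r) q = (U - E) (i', r) q := by
    intro i i' r q
    have e1 := hL (P₁ᵀ * U) i i' r q
    have e2 : ((U * P₁) * P₁ᵀ) (i, r) q = ((U * P₁) * P₁ᵀ) (i', r) q := by
      rw [Matrix.mul_apply, Matrix.mul_apply]
      exact Finset.sum_congr rfl fun c _ => by rw [hR i i' r c]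
    have e3 := hL (P₁ᵀ * ((U * P₁) * P₁ᵀ)) i i' r q
    rw [hdecomp]
    simp only [Matrix.sub_apply, Matrix.add_apply]
    rw [e1, e2, e3]
  have hkey : ∀ (i i' : Fin m) (r : Fin n) (q : Fin m × Fin n),
      U (i, r) q - U (i', r) q = E (i, r) q - E (i', r) q := by
    intro i i' r q
    have h := hconst i i' r q
    simp only [Matrix.sub_apply] at h
    linarith
  have hE : ∀ (p q : Fin m × Fin n),
      E p q = ∑ a, ∑ b, P₂ p a * (W a b * P₂ q b) := by
    intro p q
    simp only [hEdef, Matrix.mul_apply, Matrix.transpose_apply, Finset.sum_mul]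
    rw [Finset.sum_comm]
    simp only [mul_assoc]
  -- Upper bound: each entrywise difference is small
  have habs : ∀ (i i' : Fin m) (r : Fin n) (q : Fin m × Fin n),
      |U (i, r) q - U (i', r) q| ≤ ∑ a, ∑ b, 2 * |W a b| := by
    intro i i' r q
    have h1 : ∀ a b, |(P₂ (i, r) a - P₂ (i', r) a) * (W a b * P₂ q b)| ≤ 2 * |W a b| := by
      intro a b
      rw [abs_mul, abs_mul]
      have hd : |P₂ (i, r) a - P₂ (i', r) a| ≤ 2 := by
        have h1 := hP2bound (i, r) a
        have h2 := hP2bound (i', r) a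
        have h3 := abs_sub_le (P₂ (i, r) a) 0 (P₂ (i', r) a)
        simp only [sub_zero, zero_sub, abs_neg] at h3
        linarith
      have hWp : |W a b| * |P₂ q b| ≤ |W a b| := by
        nlinarith [abs_nonneg (W a b), hP2bound q b, abs_nonneg (P₂ q b)]
      nlinarith [abs_nonneg (P₂ (i, r) a - P₂ (i', r) a), abs_nonneg (W a b),
        abs_nonneg (P₂ q b), mul_nonneg (abs_nonneg (W a b)) (abs_nonneg (P₂ q b))]
    calc |U (i, r) q - U (i', r) q|
        = |∑ a, ∑ b, (P₂ (i, r) a - P₂ (i', r) a) * (W a b * P₂ q b)| := by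
          rw [hkey i i' r q, hE, hE, ← Finset.sum_sub_distrib]
          congr 1
          refine Finset.sum_congr rfl fun a _ => ?_
          rw [← Finset.sum_sub_distrib]
          exact Finset.sum_congr rfl fun b _ => by ring
      _ ≤ ∑ a, ∑ b, |(P₂ (i, r) a - P₂ (i', r) a) * (W a b * P₂ q b)| := by
          refine (Finset.abs_sum_le_sum_abs _ _).trans ?_
          exact Finset.sum_le_sum fun a _ => Finset.abs_sum_le_sum_abs _ _
      _ ≤ ∑ a, ∑ b, 2 * |W a b| :=
          Finset.sum_le_sum fun a _ => Finset.sum_le_sum fun b _ => h1 a b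
  have hinner : (∑ a, ∑ b, 2 * |W a b|) = 2 * S := by
    rw [hSdef, Finset.mul_sum]
    exact Finset.sum_congr rfl fun a _ => by rw [Finset.mul_sum]
  have hgle : ∀ i i', g i i' ≤ 2 * (n : ℝ) ^ 2 * m * S := by
    intro i i'
    have h1 : g i i' ≤ ∑ _r : Fin n, ∑ _q : Fin m × Fin n, (2 * S) := by
      refine Finset.sum_le_sum fun r _ => Finset.sum_le_sum fun q _ => ?_
      rw [← hinner]; exact habs i i' r q
    refine h1.trans ?_
    simp only [Finset.sum_const, Finset.card_univ, Fintype.card_prod, Fintype.card_fin,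
      nsmul_eq_mul]
    push_cast
    nlinarith [hS0]
  have hbdd : ∀ i : Fin m, BddAbove (Set.range (g i)) :=
    fun i => Set.Finite.bddAbove (Set.finite_range _)
  have hbdd2 : BddAbove (Set.range fun i => ⨆ i', g i i') :=
    Set.Finite.bddAbove (Set.finite_range _)
  have hg_le_diam : ∀ i i', g i i' ≤ diam := by
    intro i i'
    exact (le_ciSup (hbdd i) i').trans (le_ciSup hbdd2 i)
  have hdiam0 : 0 ≤ diam := by
    have h0 : 0 ≤ g i₀ i₀ :=
      Finset.sum_nonneg fun _ _ => Finset.sum_nonneg fun _ _ => abs_nonneg _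
    exact h0.trans (hg_le_diam i₀ i₀)
  have hdiam_le : diam ≤ 2 * (n : ℝ) ^ 2 * m * S :=
    ciSup_le fun i => ciSup_le fun i' => hgle i i'
  -- Lower bound part: P₂ᵀ * M = 0 for the constant-block-row matrix M
  set M : Matrix (Fin m × Fin n) (Fin m × Fin n) ℝ :=
    Matrix.of fun p q => U (i₀, p.2) q with hMdef
  set M₀ : Matrix (Fin n) (Fin m × Fin n) ℝ := Matrix.of fun r q => U (i₀, r) q with hM₀def
  have hsqrt : Real.sqrt m ≠ 0 := by
    have : (0 : ℝ) < m := by exact_mod_cast hm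
    positivity
  have hM : M = P₁ * ((Real.sqrt m) • (P₀ᵀ * M₀)) := by
    ext p q
    rw [Matrix.mul_apply]
    refine Eq.symm ?_
    have hstep : ∀ c : Fin n,
        P₁ p c * ((Real.sqrt m) • (P₀ᵀ * M₀)) c q = P₀ p.2 c * (P₀ᵀ * M₀) c q := by
      intro c
      rw [h₂ p c, Matrix.smul_apply, smul_eq_mul]
      field_simp
    calc (∑ c, P₁ p c * ((Real.sqrt m) • (P₀ᵀ * M₀)) c q)
        = ∑ c, P₀ p.2 c * (P₀ᵀ * M₀) c q := Finset.sum_congr rfl fun c _ => hstep c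
      _ = (P₀ * (P₀ᵀ * M₀)) p.2 q := (Matrix.mul_apply).symm
      _ = M₀ p.2 q := by rw [← Matrix.mul_assoc, mul_eq_one_comm.mp h₁, Matrix.one_mul]
      _ = M p q := rfl
  have hP2tP1 : P₂ᵀ * P₁ = 0 := by
    have h := congrArg Matrix.transpose h₅
    simpa [Matrix.transpose_mul] using h
  have hMzero : P₂ᵀ * M = 0 := by
    rw [hM, ← Matrix.mul_assoc, hP2tP1, Matrix.zero_mul]
  have hW : W = P₂ᵀ * (U - M) * P₂ := by
    rw [Matrix.mul_sub, hMzero, sub_zero]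
  have hWbound : ∀ a b, |W a b| ≤ ∑ p, ∑ q, |(U - M) p q| := by
    intro a b
    rw [hW]
    simp only [Matrix.mul_apply, Matrix.transpose_apply, Finset.sum_mul]
    have hterm : ∀ (q p : Fin m × Fin n),
        |P₂ p a * (U - M) p q * P₂ q b| ≤ |(U - M) p q| := by
      intro q p
      rw [abs_mul, abs_mul]
      nlinarith [hP2bound p a, hP2bound q b, abs_nonneg (P₂ p a), abs_nonneg (P₂ q b),
        abs_nonneg ((U - M) p q), mul_nonneg (abs_nonneg (P₂ p a)) (abs_nonneg ((U - M) p q))]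
    calc |∑ q, ∑ p, P₂ p a * (U - M) p q * P₂ q b|
        ≤ ∑ q, ∑ p, |P₂ p a * (U - M) p q * P₂ q b| := by
          refine (Finset.abs_sum_le_sum_abs _ _).trans ?_
          exact Finset.sum_le_sum fun q _ => Finset.abs_sum_le_sum_abs _ _
      _ ≤ ∑ q, ∑ p, |(U - M) p q| :=
          Finset.sum_le_sum fun q _ => Finset.sum_le_sum fun p _ => hterm q p
      _ = ∑ p, ∑ q, |(U - M) p q| := Finset.sum_comm
  have hVle : (∑ p, ∑ q, |(U - M) p q|) ≤ m * diam := by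
    calc (∑ p, ∑ q, |(U - M) p q|) = ∑ i : Fin m, g i i₀ := by
          rw [Fintype.sum_prod_type]
          exact Finset.sum_congr rfl fun i _ => Finset.sum_congr rfl fun r _ =>
            Finset.sum_congr rfl fun q _ => by simp [hMdef, Matrix.sub_apply]
      _ ≤ ∑ _i : Fin m, diam := Finset.sum_le_sum fun i _ => hg_le_diam i i₀
      _ = m * diam := by
          rw [Finset.sum_const, Finset.card_univ, Fintype.card_fin, nsmul_eq_mul]
  have hSle : S ≤ K * diam := by
    have h1 : S ≤ ∑ _a : Fin (n * (m - 1)), ∑ _b : Fin (n * (m - 1)), (m * diam) := by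
      refine Finset.sum_le_sum fun a _ => Finset.sum_le_sum fun b _ => ?_
      exact (hWbound a b).trans hVle
    refine h1.trans ?_
    rw [Finset.sum_const, Finset.sum_const, Finset.card_univ, Fintype.card_fin,
      nsmul_eq_mul, nsmul_eq_mul, hKdef]
    push_cast
    nlinarith [hdiam0, Nat.cast_nonneg (n * (m - 1)) (α := ℝ),
      sq_nonneg (((n * (m - 1) : ℕ) : ℝ))]
  constructor
  · -- c * S ≤ diam
    have hc : (0 : ℝ) < K + 1 := by linarith
    rw [inv_mul_le_iff₀ hc]
    nlinarith [hSle, hdiam0, hK0]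
  · -- diam ≤ C * S
    refine hdiam_le.trans ?_
    nlinarith [hS0]
end

section
/- Suppose Assumption A4 holds and σ > 0, and let u : [t0,∞) → ℝ^m be a solution of u̇_i(t) = σ Σ_{j=1}^m l_ij(t) u_j(t), i = 1,…,m. Then the function t ↦ min_{1≤i≤m} u_i(t) is nondecreasing on [t0,∞). In particular, if u_i(t0) ≥ 0 for all i, then u_i(t) ≥ 0 for all i and all t ≥ t0. -/
open Set Filter
open scoped Topology

/-- under Assumption A4 and `σ > 0`, along any solution of
`u̇_i = σ Σ_j l_ij(t) u_j`, the minimum `min_i u_i(t)` is nondecreasing on `[t0,∞)`;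
in particular nonnegative initial data stay nonnegative. -/
theorem stmt_12 (m : ℕ) (hm : 0 < m) (σ : ℝ) (hσ : 0 < σ)
    (L : ℝ → Matrix (Fin m) (Fin m) ℝ) (M₁ : ℝ) (hM₁ : 0 < M₁)
    (hmeas : ∀ i j, Measurable fun t => L t i j)
    (hoff : ∀ t, 0 ≤ t → ∀ i j, i ≠ j → 0 ≤ L t i j)
    (hdiag : ∀ t, 0 ≤ t → ∀ i, L t i i = -∑ j ∈ ({i}ᶜ : Finset (Fin m)), L t i j)
    (hbdd : ∀ t, 0 ≤ t → ∀ i j, |L t i j| ≤ M₁)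
    (t0 : ℝ) (ht0 : 0 ≤ t0) (u : ℝ → Fin m → ℝ)
    (hu : ∀ i, ∀ t ∈ Set.Ici t0, HasDerivAt (fun s => u s i) (σ * ∑ j, L t i j * u t j) t) :
    MonotoneOn (fun t => ⨅ i, u t i) (Set.Ici t0) ∧
      ((∀ i, 0 ≤ u t0 i) → ∀ t ∈ Set.Ici t0, ∀ i, 0 ≤ u t i) := by
  haveI : Nonempty (Fin m) := Fin.pos_iff_nonempty.mp hm
  set g : ℝ → ℝ := fun t => ⨅ i, u t i with hgdef
  have hginf : ∀ t, g t = Finset.univ.inf' Finset.univ_nonempty (u t) := fun t =>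
    (Finset.inf'_univ_eq_ciInf _).symm
  have hgle : ∀ t i, g t ≤ u t i := fun t i => by
    rw [hginf]; exact Finset.inf'_le _ (Finset.mem_univ i)
  -- continuity of g on [t0, ∞)
  have hgcont : ContinuousOn g (Ici t0) := by
    have h : ContinuousOn (fun t => Finset.univ.inf' Finset.univ_nonempty
        (fun i => u t i)) (Ici t0) :=
      ContinuousOn.finset_inf'_apply _ fun i _ => fun x hx =>
        ((hu i x hx).continuousAt).continuousWithinAt
    have heq : (fun t => Finset.univ.inf' Finset.univ_nonempty (fun i => u t i)) = g := by
      funext t; exact (hginf t).symm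
    rwa [heq] at h
  -- derivative is nonnegative at any argmin index
  have deriv_nonneg : ∀ x ∈ Ici t0, ∀ i, (∀ j, u x i ≤ u x j) →
      0 ≤ σ * ∑ j, L x i j * u x j := by
    intro x hx i hi
    have hx0 : 0 ≤ x := le_trans ht0 hx
    have h1 : ∑ j, L x i j * u x j
        = (∑ j ∈ ({i}ᶜ : Finset (Fin m)), L x i j * u x j) + L x i i * u x i := by
      rw [← Finset.sum_compl_add_sum ({i} : Finset (Fin m)) (fun j => L x i j * u x j),
        Finset.sum_singleton]
    have hsplit : ∑ j, L x i j * u x j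
        = ∑ j ∈ ({i}ᶜ : Finset (Fin m)), L x i j * (u x j - u x i) := by
      rw [h1, hdiag x hx0 i]
      simp only [mul_sub, Finset.sum_sub_distrib, ← Finset.sum_mul]
      ring
    rw [hsplit]
    refine mul_nonneg hσ.le (Finset.sum_nonneg fun j hj => ?_)
    have hji : j ≠ i := by simpa using hj
    exact mul_nonneg (hoff x hx0 i j hji.symm) (sub_nonneg.2 (hi j))
  -- right slope of -g is eventually < r for every r > 0
  have slope_bound : ∀ x ∈ Ici t0, ∀ r : ℝ, 0 < r →
      ∀ᶠ z in 𝓝[>] x, slope (fun y => -g y) x z < r := by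
    intro x hx r hr
    have hall : ∀ j : Fin m, ∀ᶠ z in 𝓝[>] x, g x - r * (z - x) < u z j := by
      intro j
      rcases eq_or_lt_of_le (hgle x j) with hactive | hlt
      · -- j is an argmin: use that its derivative is nonnegative
        have hargmin : ∀ k, u x j ≤ u x k := fun k => hactive ▸ hgle x k
        have hd : 0 ≤ σ * ∑ k, L x j k * u x k := deriv_nonneg x hx j hargmin
        have htend : Tendsto (slope (fun s => u s j) x) (𝓝[>] x)
            (𝓝 (σ * ∑ k, L x j k * u x k)) :=
          ((hasDerivAt_iff_tendsto_slope.1 (hu j x hx)).mono_left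
            (nhdsWithin_mono x fun z hz => ne_of_gt hz))
        have hev : ∀ᶠ z in 𝓝[>] x, -r < slope (fun s => u s j) x z :=
          htend (Ioi_mem_nhds (lt_of_lt_of_le (neg_neg_iff_pos.2 hr) hd))
        filter_upwards [hev, self_mem_nhdsWithin] with z hz hzx
        have hzx' : 0 < z - x := sub_pos.2 hzx
        rw [slope_def_field] at hz
        have : -r * (z - x) < u z j - u x j := by
          calc -r * (z - x) < (u z j - u x j) / (z - x) * (z - x) := by
                exact mul_lt_mul_of_pos_right hz hzx'
            _ = u z j - u x j := by field_simp
        linarith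
      · -- u x j > g x: continuity suffices
        have hc : ContinuousAt (fun s => u s j) x := (hu j x hx).continuousAt
        have hev : ∀ᶠ z in 𝓝 x, g x < u z j := hc (Ioi_mem_nhds hlt)
        filter_upwards [nhdsWithin_le_nhds hev, self_mem_nhdsWithin] with z hz hzx
        have : 0 < r * (z - x) := mul_pos hr (sub_pos.2 hzx)
        linarith
    have hAll : ∀ᶠ z in 𝓝[>] x, ∀ j, g x - r * (z - x) < u z j := eventually_all.2 hall
    filter_upwards [hAll, self_mem_nhdsWithin] with z hz hzx
    have hzx' : 0 < z - x := sub_pos.2 hzx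
    have hgz : g x - r * (z - x) < g z := by
      rw [hginf z]
      exact (Finset.lt_inf'_iff _).2 fun j _ => hz j
    rw [slope_def_field]
    rw [div_lt_iff₀ hzx']
    linarith
  -- monotonicity of g
  have hmono : MonotoneOn g (Ici t0) := by
    intro s hs t ht hst
    have key : ∀ ⦃x⦄, x ∈ Icc s t → -g x ≤ -g s := by
      refine image_le_of_liminf_slope_right_le_deriv_boundary
        (f := fun y => -g y) (B := fun _ => -g s) (B' := fun _ => 0)
        ((hgcont.mono (Icc_subset_Ici_self.trans (Ici_subset_Ici.2 hs))).neg)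
        le_rfl continuousOn_const
        (fun x _ => (hasDerivWithinAt_const x _ _)) ?_
      intro x hxi r hr
      exact ((slope_bound x (le_trans hs hxi.1) r hr).frequently)
    have := key (right_mem_Icc.2 hst)
    linarith
  refine ⟨hmono, ?_⟩
  intro h0 t ht i
  have h1 : 0 ≤ g t0 := le_ciInf h0
  have h2 : g t0 ≤ g t := hmono self_mem_Ici ht ht
  exact le_trans (le_trans h1 h2) (hgle t i)
end
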